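/- arXiv:0802.3375 — 5 statements merged into one kernel-verified Lean document; each statement's English description precedes it below -/
import Mathlib

section
/- Let I ⊆ R = K[x_1,…,x_n] be the monomial ideal generated by x^{v_1},…,x^{v_q} and let A be the n×q matrix with columns v_1,…,v_q. Then I is normal if and only if the blocking polyhedron B(Q) of Q(A) has the integer decomposition property and every minimal integer vector of B(Q) (minimal with respect to the componentwise order ≤) is a column of A. -/
open BigOperators Pointwise

/-- The monomial `x^a = x_1^{a_1} ⋯ x_n^{a_n}` in `K[x_1,…,x_n]`. -/
noncomputable def mono (K : Type*) [Field K] {n : ℕ} (a : Fin n → ℕ) :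
    MvPolynomial (Fin n) K :=
  MvPolynomial.monomial (Finsupp.equivFunOnFinite.symm a) (1 : K)

/-- The polyhedron `Q(A) = {x ∈ ℝⁿ : x ≥ 0, xA ≥ 1}`, where `A` is the
`n × q` matrix with columns `v 0, …, v (q-1)`. -/
def QA {n q : ℕ} (v : Fin q → Fin n → ℕ) : Set (Fin n → ℝ) :=
  {x | (∀ i, 0 ≤ x i) ∧ ∀ j, 1 ≤ ∑ i, x i * (v j i : ℝ)}

/-- The blocking polyhedron `B(Q) = {z ∈ ℝⁿ : z ≥ 0, ⟨z,x⟩ ≥ 1 ∀ x ∈ Q(A)}`. -/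
def BQ {n q : ℕ} (v : Fin q → Fin n → ℕ) : Set (Fin n → ℝ) :=
  {z | (∀ i, 0 ≤ z i) ∧ ∀ x ∈ QA v, 1 ≤ ∑ i, z i * x i}

/-- A set `S ⊆ ℝⁿ` has the integer decomposition property if for each `k ∈ ℕ`,
every integer vector in `k • S` is a sum of `k` integer vectors in `S`. -/
def HasIDP {n : ℕ} (S : Set (Fin n → ℝ)) : Prop :=
  ∀ (k : ℕ) (a : Fin n → ℤ), (fun i => (a i : ℝ)) ∈ (k : ℝ) • S →
    ∃ f : Fin k → Fin n → ℤ,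
      (∀ j, (fun i => (f j i : ℝ)) ∈ S) ∧ a = ∑ j, f j

open Finset in
theorem farkas_dichotomy : ∀ (m : ℕ) {ι : Type} [Fintype ι] (c : ι → Fin m → ℚ) (b : ι → ℚ),
    (∃ x : Fin m → ℚ, ∀ i, ∑ t, c i t * x t ≤ b i) ∨
    (∃ y : ι → ℚ, (∀ i, 0 ≤ y i) ∧ (∀ t, ∑ i, y i * c i t = 0) ∧ ∑ i, y i * b i < 0) := by
  intro m
  induction m with
  | zero =>
    intro ι _ c b
    classical
    by_cases h : ∀ i, 0 ≤ b i
    · exact Or.inl ⟨fun _ => 0, fun i => by simpa using h i⟩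
    · push_neg at h
      obtain ⟨i₀, hi₀⟩ := h
      refine Or.inr ⟨fun i => if i = i₀ then 1 else 0, ?_, ?_, ?_⟩
      · intro i; dsimp only; split <;> norm_num
      · intro t; exact t.elim0
      · simpa only [ite_mul, one_mul, zero_mul, Finset.sum_ite_eq', mem_univ, if_true] using hi₀
  | succ m ih =>
    intro ι _ c b
    classical
    set lst := Fin.last m with hlst
    let ι' : Type := {i : ι // c i lst = 0} ⊕ ({i : ι // 0 < c i lst} × {i : ι // c i lst < 0})
    let comb : ι' → (ι → ℚ) → ℚ := fun i' f =>
      match i' with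
      | Sum.inl z => f z.1
      | Sum.inr (p, nn) => f p.1 / c p.1 lst - f nn.1 / c nn.1 lst
    let contrib : ι' → ι → ℚ := fun i' i =>
      match i' with
      | Sum.inl z => if i = z.1 then 1 else 0
      | Sum.inr (p, nn) => (if i = p.1 then 1 / c p.1 lst else 0) +
          (if i = nn.1 then -(1 / c nn.1 lst) else 0)
    have contrib_nonneg : ∀ i' i, 0 ≤ contrib i' i := by
      rintro (z | ⟨p, nn⟩) i
      · simp only [contrib]; split <;> norm_num
      · have hp : 0 < c p.1 lst := p.2
        have hn : c nn.1 lst < 0 := nn.2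
        have h1 : (0:ℚ) ≤ 1 / c p.1 lst := le_of_lt (by positivity)
        have h2 : 1 / c nn.1 lst < 0 := div_neg_of_pos_of_neg one_pos hn
        simp only [contrib]
        apply add_nonneg
        · split
          · exact h1
          · exact le_refl 0
        · split
          · linarith
          · exact le_refl 0
    have sum_contrib : ∀ (i' : ι') (f : ι → ℚ), ∑ i, contrib i' i * f i = comb i' f := by
      rintro (z | ⟨p, nn⟩) f
      · simp [contrib, comb, ite_mul]
      · simp only [contrib, comb, add_mul, ite_mul, zero_mul, Finset.sum_add_distrib,
          Finset.sum_ite_eq', mem_univ, if_true, neg_mul]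
        ring
    have comb_last : ∀ i' : ι', comb i' (fun i => c i lst) = 0 := by
      rintro (z | ⟨p, nn⟩)
      · exact z.2
      · have hp : c p.1 lst ≠ 0 := ne_of_gt p.2
        have hn : c nn.1 lst ≠ 0 := ne_of_lt nn.2
        simp only [comb]
        rw [div_self hp, div_self hn, sub_self]
    let c' : ι' → Fin m → ℚ := fun i' t => comb i' (fun i => c i (Fin.castSucc t))
    let b' : ι' → ℚ := fun i' => comb i' b
    rcases ih c' b' with ⟨x', hx'⟩ | ⟨y', hy0, hyc, hyb⟩
    · -- feasible: extend x'
      left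
      set s : ι → ℚ := fun i => ∑ t : Fin m, c i (Fin.castSucc t) * x' t with hs
      have key : ∀ (τ : ℚ) (i : ι), ∑ t, c i t * (Fin.snoc x' τ : Fin (m+1) → ℚ) t
          = s i + c i lst * τ := by
        intro τ i
        rw [Fin.sum_univ_castSucc]
        simp [s, lst]
      have hz : ∀ z : {i : ι // c i lst = 0}, s z.1 ≤ b z.1 := by
        intro z
        have h := hx' (Sum.inl z)
        simpa [c', b', comb, s] using h
      have hpn : ∀ (p : {i : ι // 0 < c i lst}) (nn : {i : ι // c i lst < 0}),
          (b nn.1 - s nn.1) / c nn.1 lst ≤ (b p.1 - s p.1) / c p.1 lst := by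
        intro p nn
        have h := hx' (Sum.inr (p, nn))
        have hsum : ∑ t : Fin m, c' (Sum.inr (p, nn)) t * x' t
            = s p.1 / c p.1 lst - s nn.1 / c nn.1 lst := by
          simp only [c', comb, sub_mul, div_mul_eq_mul_div, Finset.sum_sub_distrib,
            ← Finset.sum_div, s]
        rw [hsum] at h
        have h1 : s p.1 / c p.1 lst - s nn.1 / c nn.1 lst
            ≤ b p.1 / c p.1 lst - b nn.1 / c nn.1 lst := h
        rw [sub_div, sub_div]
        linarith
      by_cases hP : Nonempty {i : ι // 0 < c i lst}
      · haveI := hP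
        set τ := Finset.inf' Finset.univ Finset.univ_nonempty
          (fun p : {i : ι // 0 < c i lst} => (b p.1 - s p.1) / c p.1 lst) with hτ
        refine ⟨Fin.snoc x' τ, fun i => ?_⟩
        rw [key]
        rcases lt_trichotomy (c i lst) 0 with hneg | hzero | hpos
        · have hle : (b i - s i) / c i lst ≤ τ :=
            Finset.le_inf' _ _ (fun p _ => hpn p ⟨i, hneg⟩)
          rw [div_le_iff_of_neg hneg] at hle
          linarith
        · rw [hzero, zero_mul, add_zero]; exact hz ⟨i, hzero⟩
        · have hle : τ ≤ (b i - s i) / c i lst :=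
            Finset.inf'_le _ (Finset.mem_univ (⟨i, hpos⟩ : {i : ι // 0 < c i lst}))
          rw [le_div_iff₀ hpos] at hle
          linarith
      · by_cases hN : Nonempty {i : ι // c i lst < 0}
        · haveI := hN
          set τ := Finset.sup' Finset.univ Finset.univ_nonempty
            (fun nn : {i : ι // c i lst < 0} => (b nn.1 - s nn.1) / c nn.1 lst) with hτ
          refine ⟨Fin.snoc x' τ, fun i => ?_⟩
          rw [key]
          rcases lt_trichotomy (c i lst) 0 with hneg | hzero | hpos
          · have hle : (b i - s i) / c i lst ≤ τ := by
              rw [hτ]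
              exact Finset.le_sup'
                (fun nn : {i : ι // c i lst < 0} => (b nn.1 - s nn.1) / c nn.1 lst)
                (Finset.mem_univ (⟨i, hneg⟩ : {i : ι // c i lst < 0}))
            rw [div_le_iff_of_neg hneg] at hle
            linarith
          · rw [hzero, zero_mul, add_zero]; exact hz ⟨i, hzero⟩
          · exact absurd ⟨⟨i, hpos⟩⟩ hP
        · refine ⟨Fin.snoc x' 0, fun i => ?_⟩
          rw [key]
          rcases lt_trichotomy (c i lst) 0 with hneg | hzero | hpos
          · exact absurd ⟨⟨i, hneg⟩⟩ hN
          · rw [hzero, zero_mul, add_zero]; exact hz ⟨i, hzero⟩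
          · exact absurd ⟨⟨i, hpos⟩⟩ hP
    · -- certificate: lift it
      right
      have swap : ∀ f : ι → ℚ, ∑ i, (∑ i', y' i' * contrib i' i) * f i
          = ∑ i', y' i' * comb i' f := by
        intro f
        calc ∑ i, (∑ i', y' i' * contrib i' i) * f i
            = ∑ i, ∑ i', y' i' * (contrib i' i * f i) := by
              refine Finset.sum_congr rfl fun i _ => ?_
              rw [Finset.sum_mul]
              exact Finset.sum_congr rfl fun i' _ => by ring
          _ = ∑ i', ∑ i, y' i' * (contrib i' i * f i) := Finset.sum_comm
          _ = ∑ i', y' i' * comb i' f := by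
              refine Finset.sum_congr rfl fun i' _ => ?_
              rw [← Finset.mul_sum, sum_contrib]
      refine ⟨fun i => ∑ i', y' i' * contrib i' i, ?_, ?_, ?_⟩
      · intro i
        exact Finset.sum_nonneg fun i' _ => mul_nonneg (hy0 i') (contrib_nonneg i' i)
      · intro t
        induction t using Fin.lastCases with
        | last =>
          rw [swap (fun i => c i lst)]
          simp only [comb_last, mul_zero, Finset.sum_const_zero]
        | cast t' =>
          rw [swap (fun i => c i (Fin.castSucc t'))]
          exact hyc t'
      · rw [swap b]
        exact hyb

section CombSide

variable {n q : ℕ} (v : Fin q → Fin n → ℕ)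

def MemM (k : ℕ) (a : Fin n → ℕ) : Prop :=
  ∃ M : Multiset (Fin q), Multiset.card M = k ∧ ∀ i, (M.map fun j => v j i).sum ≤ a i

def ClM (k : ℕ) (a : Fin n → ℕ) : Prop :=
  ∃ p : ℕ, 0 < p ∧ MemM v (p * k) (fun i => p * a i)

lemma multiset_exchange {α : Type*} (M : Multiset α) (g : α → Fin n → ℝ) (x : Fin n → ℝ) :
    ∑ i, (M.map fun j => g j i).sum * x i = (M.map fun j => ∑ i, g j i * x i).sum := by
  induction M using Multiset.induction with
  | empty => simp
  | cons j M ih => simp [add_mul, Finset.sum_add_distrib, ih]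

/-- easy direction: `ClM`-type membership certifies membership in `k · B(Q)`. -/
lemma memM_imp_BQk {p k : ℕ} {a : Fin n → ℕ} (hp : 0 < p)
    (h : MemM v (p * k) (fun i => p * a i)) :
    ∀ x ∈ QA v, (k : ℝ) ≤ ∑ i, (a i : ℝ) * x i := by
  rintro x ⟨hx0, hx1⟩
  obtain ⟨M, hcard, hle⟩ := h
  have key : (p : ℝ) * (k : ℝ) ≤ (p : ℝ) * ∑ i, (a i : ℝ) * x i := by
    have h1 : (M.map fun j => ∑ i, (v j i : ℝ) * x i).sum
        ≤ ∑ i, ((p * a i : ℕ) : ℝ) * x i := by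
      rw [← multiset_exchange]
      refine Finset.sum_le_sum fun i _ => ?_
      refine mul_le_mul_of_nonneg_right ?_ (hx0 i)
      have := hle i
      calc (M.map fun j => (v j i : ℝ)).sum
          = (((M.map fun j => v j i).sum : ℕ) : ℝ) := by
            rw [Nat.cast_multiset_sum, Multiset.map_map]; rfl
        _ ≤ _ := by exact_mod_cast this
    have h2 : ((p * k : ℕ) : ℝ) ≤ (M.map fun j => ∑ i, (v j i : ℝ) * x i).sum := by
      have := Multiset.card_nsmul_le_sum (s := M.map fun j => ∑ i, (v j i : ℝ) * x i)
        (a := (1:ℝ)) (by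
          intro y hy
          obtain ⟨j, _, rfl⟩ := Multiset.mem_map.mp hy
          simpa [mul_comm] using hx1 j)
      simpa [Multiset.card_map, hcard, nsmul_eq_mul] using this
    calc (p:ℝ) * k = ((p * k : ℕ) : ℝ) := by push_cast; ring
      _ ≤ ∑ i, ((p * a i : ℕ) : ℝ) * x i := le_trans h2 h1
      _ = (p:ℝ) * ∑ i, (a i : ℝ) * x i := by
          push_cast
          rw [Finset.mul_sum]
          exact Finset.sum_congr rfl fun i _ => by ring
  exact le_of_mul_le_mul_left key (by exact_mod_cast hp)

/-- hard direction -/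
lemma BQk_imp_clM {k : ℕ} (hk : 0 < k) (a : Fin n → ℕ)
    (h : ∀ x ∈ QA v, (k : ℝ) ≤ ∑ i, (a i : ℝ) * x i) : ClM v k a := by
  classical
  -- set up the λ-system
  set c : (Fin q ⊕ (Unit ⊕ Fin n)) → Fin q → ℚ := fun ix => match ix with
    | Sum.inl j => fun t => if t = j then (-1 : ℚ) else 0
    | Sum.inr (Sum.inl _) => fun _ => (-1 : ℚ)
    | Sum.inr (Sum.inr i) => fun j => (k : ℚ) * (v j i : ℚ) with hc
  set b : (Fin q ⊕ (Unit ⊕ Fin n)) → ℚ := fun ix => match ix with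
    | Sum.inl _ => 0
    | Sum.inr (Sum.inl _) => (-1 : ℚ)
    | Sum.inr (Sum.inr i) => (a i : ℚ) with hb
  rcases farkas_dichotomy q c b with ⟨lam, hlam⟩ | ⟨y, hy0, hyc, hyb⟩
  · -- feasible: extract rational convex combination, clear denominators
    have hlam0 : ∀ j, 0 ≤ lam j := by
      intro j
      have := hlam (Sum.inl j)
      simp only [c, b, ite_mul, neg_mul, one_mul, zero_mul,
        Finset.sum_ite_eq', Finset.mem_univ, if_true] at this
      linarith [this]
    have hlam1 : 1 ≤ ∑ j, lam j := by
      have := hlam (Sum.inr (Sum.inl ()))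
      simp only [c, b, neg_mul, one_mul, Finset.sum_neg_distrib] at this
      have h2 : -∑ j, lam j ≤ -1 := by
        simpa [← Finset.sum_neg_distrib] using this
      linarith
    have hlam3 : ∀ i, ∑ j, (k : ℚ) * (v j i : ℚ) * lam j ≤ (a i : ℚ) :=
      fun i => hlam (Sum.inr (Sum.inr i))
    -- normalize so the weights sum to 1
    set s : ℚ := ∑ j, lam j with hsum
    have hspos : 0 < s := lt_of_lt_of_le one_pos hlam1
    set lam' : Fin q → ℚ := fun j => lam j / s with hlamd
    have hlam'0 : ∀ j, 0 ≤ lam' j := fun j => div_nonneg (hlam0 j) hspos.le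
    have hlam'sum : ∑ j, lam' j = 1 := by
      simp only [hlamd]
      rw [← Finset.sum_div]
      exact div_self (ne_of_gt hspos)
    have hlam'3 : ∀ i, (k:ℚ) * ∑ j, (v j i : ℚ) * lam' j ≤ (a i : ℚ) := by
      intro i
      have h1 : (k:ℚ) * ∑ j, (v j i:ℚ) * lam' j
          = (∑ j, (k:ℚ) * (v j i:ℚ) * lam j) / s := by
        rw [Finset.mul_sum, Finset.sum_div]
        exact Finset.sum_congr rfl fun j _ => by simp only [hlamd]; ring
      rw [h1]
      calc (∑ j, (k:ℚ)*(v j i:ℚ)*lam j)/s ≤ (a i : ℚ)/s := by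
            gcongr
            exact hlam3 i
        _ ≤ (a i:ℚ) := div_le_self (by positivity) hlam1
    -- clear denominators
    set p : ℕ := ∏ j, (lam' j).den with hp
    have hppos : 0 < p := Finset.prod_pos fun j _ => (lam' j).den_pos
    have hdvd : ∀ j, (lam' j).den ∣ p := fun j => Finset.dvd_prod_of_mem _ (Finset.mem_univ j)
    have hm : ∀ j, ∃ mj : ℕ, (mj : ℚ) = lam' j * p := by
      intro j
      have hnum0 : 0 ≤ (lam' j).num := Rat.num_nonneg.mpr (hlam'0 j)
      have hz0 : 0 ≤ (lam' j).num * ((p / (lam' j).den : ℕ) : ℤ) :=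
        mul_nonneg hnum0 (by positivity)
      have hden : ((lam' j).den : ℚ) ≠ 0 := Nat.cast_ne_zero.mpr (lam' j).den_pos.ne'
      have hcancel : ((p / (lam' j).den : ℕ) : ℚ) = (p : ℚ) / ((lam' j).den : ℚ) :=
        Nat.cast_div (hdvd j) hden
      obtain ⟨mj, hmj⟩ := Int.eq_ofNat_of_zero_le hz0
      refine ⟨mj, ?_⟩
      calc (mj : ℚ) = ((mj : ℤ) : ℚ) := by norm_cast
        _ = (((lam' j).num * ((p / (lam' j).den : ℕ) : ℤ) : ℤ) : ℚ) := by rw [← hmj]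
        _ = ((lam' j).num : ℚ) * ((p / (lam' j).den : ℕ) : ℚ) := by rw [Int.cast_mul, Int.cast_natCast]
        _ = ((lam' j).num : ℚ) * ((p:ℚ) / ((lam' j).den : ℚ)) := by rw [hcancel]
        _ = lam' j * p := by
              conv_rhs => rw [← Rat.num_div_den (lam' j)]
              field_simp
    choose m hmQ using hm
    have hmsum : ∑ j, m j = p := by
      have hQ : ((∑ j, m j : ℕ) : ℚ) = ((p:ℕ):ℚ) := by
        push_cast
        calc ∑ j, (m j : ℚ) = ∑ j, lam' j * p :=
              Finset.sum_congr rfl fun j _ => hmQ j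
          _ = (∑ j, lam' j) * p := (Finset.sum_mul _ _ _).symm
          _ = p := by rw [hlam'sum, one_mul]
      exact_mod_cast hQ
    have hmv : ∀ i, k * ∑ j, m j * v j i ≤ p * a i := by
      intro i
      have hQ : ((k * ∑ j, m j * v j i : ℕ) : ℚ) ≤ ((p * a i : ℕ) : ℚ) := by
        push_cast
        calc (k:ℚ) * ∑ j, (m j:ℚ) * (v j i:ℚ)
            = ((k:ℚ) * ∑ j, (v j i:ℚ) * lam' j) * p := by
              rw [Finset.mul_sum, Finset.mul_sum, Finset.sum_mul]
              exact Finset.sum_congr rfl fun j _ => by rw [hmQ j]; ring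
          _ ≤ (a i:ℚ) * p := mul_le_mul_of_nonneg_right (hlam'3 i) (by positivity)
          _ = (p:ℚ) * (a i:ℚ) := by ring
      exact_mod_cast hQ
    refine ⟨p, hppos, Finset.univ.val.bind fun j => Multiset.replicate (k * m j) j, ?_, ?_⟩
    · rw [Multiset.card_bind]
      have : (Multiset.map (Multiset.card ∘ fun j => Multiset.replicate (k * m j) j)
          Finset.univ.val).sum = ∑ j, k * m j := by
        apply congrArg Multiset.sum
        apply Multiset.map_congr rfl
        intro j _
        simp [Multiset.card_replicate]
      rw [this, ← Finset.mul_sum, hmsum, mul_comm]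
    · intro i
      rw [Multiset.map_bind, Multiset.sum_bind]
      have : (Multiset.map (fun j => (Multiset.map (fun j' => v j' i)
          (Multiset.replicate (k * m j) j)).sum) Finset.univ.val).sum
          = ∑ j, k * m j * v j i := by
        apply congrArg Multiset.sum
        apply Multiset.map_congr rfl
        intro j _
        simp [Multiset.map_replicate, Multiset.sum_replicate, smul_eq_mul]
      rw [this]
      calc ∑ j, k * m j * v j i = k * ∑ j, m j * v j i := by
            rw [Finset.mul_sum]
            exact Finset.sum_congr rfl fun j _ => (mul_assoc _ _ _)
        _ ≤ p * a i := hmv i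
  · -- certificate: build a rational point of QA contradicting h
    set al : Fin q → ℚ := fun j => y (Sum.inl j) with hal
    set β : ℚ := y (Sum.inr (Sum.inl ())) with hβ
    set w : Fin n → ℚ := fun i => y (Sum.inr (Sum.inr i)) with hw
    have hal0 : ∀ j, 0 ≤ al j := fun j => hy0 _
    have hβ0 : 0 ≤ β := hy0 _
    have hw0 : ∀ i, 0 ≤ w i := fun i => hy0 _
    have hcol : ∀ t, (k : ℚ) * ∑ i, w i * (v t i : ℚ) = al t + β := by
      intro t
      have hthis := hyc t
      rw [Fintype.sum_sum_type, Fintype.sum_sum_type] at hthis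
      simp only [c, mul_ite, mul_neg, mul_one, mul_zero, Finset.sum_ite_eq,
        Finset.sum_ite_eq', Finset.mem_univ, if_true, Fintype.univ_punit,
        Finset.sum_singleton] at hthis
      have h3 : ∑ i, y (Sum.inr (Sum.inr i)) * ((k:ℚ) * (v t i:ℚ))
          = (k:ℚ) * ∑ i, w i * (v t i : ℚ) := by
        rw [Finset.mul_sum]
        exact Finset.sum_congr rfl fun i _ => by simp only [hw]; ring
      rw [h3] at hthis
      simp only [hal, hβ]
      linarith [hthis]
    have hlt : ∑ i, w i * (a i : ℚ) < β := by
      have hthis := hyb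
      rw [Fintype.sum_sum_type, Fintype.sum_sum_type] at hthis
      simp only [b, mul_zero, mul_neg, mul_one, Finset.sum_const_zero,
        Fintype.univ_punit, Finset.sum_singleton, zero_add] at hthis
      simp only [hβ, hw]
      linarith [hthis]
    have hβpos : 0 < β := by
      have : 0 ≤ ∑ i, w i * (a i : ℚ) :=
        Finset.sum_nonneg fun i _ => mul_nonneg (hw0 i) (by positivity)
      linarith
    -- the rational point
    set x : Fin n → ℝ := fun i => ((k : ℚ) * w i / β : ℚ) with hx
    have hxQA : x ∈ QA v := by
      constructor
      · intro i
        have h0 : (0:ℚ) ≤ (k : ℚ) * w i / β :=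
          div_nonneg (mul_nonneg (by positivity) (hw0 i)) hβpos.le
        simp only [hx]
        exact_mod_cast h0
      · intro j
        have hq : (1:ℚ) ≤ ∑ i, ((k:ℚ) * w i / β) * (v j i : ℚ) := by
          have : ∑ i, ((k:ℚ) * w i / β) * (v j i : ℚ)
              = ((k:ℚ) * ∑ i, w i * (v j i:ℚ)) / β := by
            rw [Finset.mul_sum, Finset.sum_div]
            exact Finset.sum_congr rfl fun i _ => by ring
          rw [this, hcol j, le_div_iff₀ hβpos, one_mul]
          linarith [hal0 j]
        calc (1:ℝ) = ((1:ℚ):ℝ) := by norm_num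
          _ ≤ ((∑ i, ((k:ℚ) * w i / β) * (v j i : ℚ) : ℚ) : ℝ) := by exact_mod_cast hq
          _ = ∑ i, x i * (v j i : ℝ) := by push_cast [hx]; rfl
    have hcontra := h x hxQA
    have hqlt : ∑ i, (a i : ℚ) * ((k:ℚ) * w i / β) < (k:ℚ) := by
      have heq : ∑ i, (a i : ℚ) * ((k:ℚ) * w i / β)
          = ((k:ℚ) * ∑ i, w i * (a i : ℚ)) / β := by
        rw [Finset.mul_sum, Finset.sum_div]
        exact Finset.sum_congr rfl fun i _ => by ring
      rw [heq, div_lt_iff₀ hβpos]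
      have : (0:ℚ) < (k:ℚ) := by exact_mod_cast hk
      nlinarith [hlt]
    have : ∑ i, (a i : ℝ) * x i < (k:ℝ) := by
      calc ∑ i, (a i : ℝ) * x i
          = ((∑ i, (a i : ℚ) * ((k:ℚ) * w i / β) : ℚ) : ℝ) := by push_cast [hx]; rfl
        _ < ((k:ℚ):ℝ) := by exact_mod_cast hqlt
        _ = (k:ℝ) := by norm_num
    linarith

end CombSide

section IdealSide

variable (K : Type*) [Field K] {n q : ℕ} (v : Fin q → Fin n → ℕ)

noncomputable def colF (j : Fin q) : Fin n →₀ ℕ := Finsupp.equivFunOnFinite.symm (v j)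

def SK (k : ℕ) : Set (Fin n →₀ ℕ) :=
  {s | ∃ M : Multiset (Fin q), Multiset.card M = k ∧ s = (M.map (colF v)).sum}

lemma sumF_apply (M : Multiset (Fin q)) (i : Fin n) :
    ((M.map (colF v)).sum) i = (M.map fun j => v j i).sum := by
  induction M using Multiset.induction with
  | empty => simp
  | cons j M ih =>
    simp only [Multiset.map_cons, Multiset.sum_cons, Finsupp.add_apply]
    rw [ih]
    simp [colF]

lemma gen_eq : {f : MvPolynomial (Fin n) K | ∃ j, f = mono K (v j)}
    = (fun s => MvPolynomial.monomial s (1:K)) '' (SK v 1) := by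
  ext f
  constructor
  · rintro ⟨j, rfl⟩
    exact ⟨colF v j, ⟨{j}, by simp, by simp⟩, rfl⟩
  · rintro ⟨s, ⟨M, hM, rfl⟩, rfl⟩
    obtain ⟨j, rfl⟩ := Multiset.card_eq_one.mp hM
    exact ⟨j, by simp [mono, colF]⟩

lemma pow_eq (k : ℕ) :
    (Ideal.span ((fun s => MvPolynomial.monomial s (1:K)) '' SK v 1)) ^ k
      = Ideal.span ((fun s => MvPolynomial.monomial s (1:K)) '' SK v k) := by
  induction k with
  | zero =>
    rw [pow_zero, Ideal.one_eq_top, eq_comm, Ideal.eq_top_iff_one]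
    apply Ideal.subset_span
    refine ⟨0, ⟨0, by simp, by simp⟩, by simp⟩
  | succ k ih =>
    rw [pow_succ, ih, Ideal.span_mul_span']
    apply le_antisymm
    · rw [Ideal.span_le]
      rintro f hf
      rw [Set.mem_mul] at hf
      obtain ⟨x, ⟨s, ⟨M, hM, rfl⟩, rfl⟩, y, ⟨t, ⟨M₁, hM₁, rfl⟩, rfl⟩, rfl⟩ := hf
      apply Ideal.subset_span
      refine ⟨(M.map (colF v)).sum + (M₁.map (colF v)).sum, ⟨M + M₁, ?_, ?_⟩, ?_⟩
      · simp [hM, hM₁]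
      · rw [Multiset.map_add, Multiset.sum_add]
      · rw [MvPolynomial.monomial_mul, one_mul]
    · rw [Ideal.span_le]
      rintro f ⟨s, ⟨M, hM, rfl⟩, rfl⟩
      have hpos : 0 < Multiset.card M := by omega
      obtain ⟨j, hj⟩ := Multiset.card_pos_iff_exists_mem.mp hpos
      obtain ⟨M', rfl⟩ := Multiset.exists_cons_of_mem hj
      have hM' : Multiset.card M' = k := by
        rw [Multiset.card_cons] at hM; omega
      have heq : (MvPolynomial.monomial (((j ::ₘ M').map (colF v)).sum) (1:K))
          = MvPolynomial.monomial ((M'.map (colF v)).sum) (1:K)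
            * MvPolynomial.monomial (colF v j) (1:K) := by
        rw [MvPolynomial.monomial_mul, one_mul]
        congr 1
        rw [Multiset.map_cons, Multiset.sum_cons, add_comm]
      dsimp only
      rw [heq]
      have h1 : (MvPolynomial.monomial ((M'.map (colF v)).sum) (1:K))
          ∈ ((fun s => MvPolynomial.monomial s (1:K)) '' SK v k) :=
        ⟨_, ⟨M', hM', rfl⟩, rfl⟩
      have h2 : (MvPolynomial.monomial (colF v j) (1:K))
          ∈ ((fun s => MvPolynomial.monomial s (1:K)) '' SK v 1) :=
        ⟨colF v j, ⟨{j}, by simp, by simp⟩, rfl⟩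
      rw [← Ideal.span_mul_span']
      exact Ideal.mul_mem_mul (Ideal.subset_span h1) (Ideal.subset_span h2)

lemma mono_mem_pow_iff (k : ℕ) (a : Fin n → ℕ) :
    mono K a ∈ (Ideal.span {f : MvPolynomial (Fin n) K | ∃ j, f = mono K (v j)}) ^ k
      ↔ MemM v k a := by
  classical
  rw [gen_eq, pow_eq, MvPolynomial.mem_ideal_span_monomial_image]
  have hone : (1:K) ≠ 0 := one_ne_zero
  have hsup : (mono K a).support = {Finsupp.equivFunOnFinite.symm a} := by
    rw [mono, MvPolynomial.support_monomial, if_neg hone]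
  constructor
  · intro h
    obtain ⟨si, ⟨M, hM, rfl⟩, hle⟩ := h (Finsupp.equivFunOnFinite.symm a)
      (by rw [hsup]; exact Finset.mem_singleton_self _)
    refine ⟨M, hM, fun i => ?_⟩
    have := Finsupp.le_def.mp hle i
    rw [sumF_apply] at this
    simpa using this
  · rintro ⟨M, hM, hle⟩ xi hxi
    rw [hsup, Finset.mem_singleton] at hxi
    subst hxi
    refine ⟨(M.map (colF v)).sum, ⟨M, hM, rfl⟩, ?_⟩
    rw [Finsupp.le_def]
    intro i
    rw [sumF_apply]
    simpa using hle i

lemma mono_pow (a : Fin n → ℕ) (p : ℕ) :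
    mono K a ^ p = mono K (fun i => p * a i) := by
  have hs : (p • Finsupp.equivFunOnFinite.symm a)
      = Finsupp.equivFunOnFinite.symm (fun i => p * a i) := by
    ext i
    simp
  rw [mono, mono, MvPolynomial.monomial_pow, one_pow, hs]

lemma normalIdeal_iff (I : Ideal (MvPolynomial (Fin n) K))
    (hI : I = Ideal.span {f | ∃ j, f = mono K (v j)}) :
    (∀ i : ℕ, 1 ≤ i →
        I ^ i = Ideal.span {f | ∃ a : Fin n → ℕ, f = mono K a ∧
          ∃ p : ℕ, 0 < p ∧ mono K a ^ p ∈ I ^ (p * i)})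
    ↔ (∀ i : ℕ, 1 ≤ i → ∀ a : Fin n → ℕ, ClM v i a → MemM v i a) := by
  subst hI
  have hset : ∀ i : ℕ, {f : MvPolynomial (Fin n) K | ∃ a : Fin n → ℕ, f = mono K a ∧
      ∃ p : ℕ, 0 < p ∧ mono K a ^ p ∈
        (Ideal.span {f | ∃ j, f = mono K (v j)}) ^ (p * i)}
      = {f | ∃ a : Fin n → ℕ, f = mono K a ∧ ClM v i a} := by
    intro i
    ext f
    constructor
    · rintro ⟨a, rfl, p, hp, hmem⟩
      rw [mono_pow, mono_mem_pow_iff] at hmem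
      exact ⟨a, rfl, p, hp, hmem⟩
    · rintro ⟨a, rfl, p, hp, hmem⟩
      exact ⟨a, rfl, p, hp, by rw [mono_pow, mono_mem_pow_iff]; exact hmem⟩
  constructor
  · intro h i hi a hCl
    rw [← mono_mem_pow_iff K v i a, h i hi, hset i]
    exact Ideal.subset_span ⟨a, rfl, hCl⟩
  · intro h i hi
    rw [hset i]
    apply le_antisymm
    · rw [gen_eq, pow_eq, Ideal.span_le]
      rintro f ⟨s, ⟨M, hM, rfl⟩, rfl⟩
      apply Ideal.subset_span
      refine ⟨Finsupp.equivFunOnFinite ((M.map (colF v)).sum), ?_, 1, one_pos, ?_⟩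
      · rw [mono]
        congr 1
        exact (Equiv.symm_apply_apply _ _).symm
      · rw [one_mul]
        refine ⟨M, hM, fun i' => ?_⟩
        show (Multiset.map (fun j => v j i') M).sum
            ≤ 1 * Finsupp.equivFunOnFinite (Multiset.map (colF v) M).sum i'
        rw [one_mul, ← sumF_apply]
        exact le_rfl
    · rw [Ideal.span_le]
      rintro f ⟨a, rfl, hCl⟩
      rw [SetLike.mem_coe, mono_mem_pow_iff]
      exact h i hi a hCl

end IdealSide

section RealSide

variable {n q : ℕ} (v : Fin q → Fin n → ℕ)

lemma col_mem_BQ (j : Fin q) : (fun i => (v j i : ℝ)) ∈ BQ v := by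
  refine ⟨fun i => by positivity, ?_⟩
  rintro x ⟨hx0, hx1⟩
  calc (1:ℝ) ≤ ∑ i, x i * (v j i : ℝ) := hx1 j
    _ = ∑ i, (v j i : ℝ) * x i := Finset.sum_congr rfl fun i _ => mul_comm _ _

lemma BQ_up {z z' : Fin n → ℝ} (hz : z ∈ BQ v) (h : ∀ i, z i ≤ z' i) : z' ∈ BQ v := by
  obtain ⟨hz0, hz1⟩ := hz
  refine ⟨fun i => le_trans (hz0 i) (h i), ?_⟩
  intro x hx
  refine le_trans (hz1 x hx) (Finset.sum_le_sum fun i _ => ?_)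
  exact mul_le_mul_of_nonneg_right (h i) (hx.1 i)

/-- every nonneg integer vector of `BQ` dominates a minimal one -/
lemma exists_minimal : ∀ (N : ℕ) (cvec : Fin n → ℕ), (∑ i, cvec i) ≤ N →
    ((fun i => (cvec i : ℝ)) ∈ BQ v) →
    ∃ b : Fin n → ℕ, (fun i => (b i : ℝ)) ∈ BQ v ∧ b ≤ cvec ∧
      (∀ b' : Fin n → ℕ, (fun i => (b' i : ℝ)) ∈ BQ v → b' ≤ b → b' = b) := by
  intro N
  induction N with
  | zero =>
    intro cvec hsum hBQ
    have hc0 : ∀ i, cvec i = 0 := by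
      intro i
      have h1 := Finset.single_le_sum (f := cvec) (fun i _ => Nat.zero_le _) (Finset.mem_univ i)
      omega
    refine ⟨cvec, hBQ, le_refl _, fun b' hb' hle => funext fun i => ?_⟩
    have h2 : b' i ≤ cvec i := hle i
    have h3 := hc0 i
    omega
  | succ N ih =>
    intro cvec hsum hBQ
    by_cases hmin : ∀ b' : Fin n → ℕ, (fun i => (b' i : ℝ)) ∈ BQ v → b' ≤ cvec → b' = cvec
    · exact ⟨cvec, hBQ, le_refl _, hmin⟩
    · push_neg at hmin
      obtain ⟨b', hb'BQ, hb'le, hb'ne⟩ := hmin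
      have hlt : ∑ i, b' i < ∑ i, cvec i := by
        refine Finset.sum_lt_sum (fun i _ => hb'le i) ?_
        obtain ⟨i, hi⟩ := Function.ne_iff.mp hb'ne
        exact ⟨i, Finset.mem_univ i, lt_of_le_of_ne (hb'le i) hi⟩
      obtain ⟨b, hbBQ, hble, hbmin⟩ := ih b' (by omega) hb'BQ
      exact ⟨b, hbBQ, le_trans hble hb'le, hbmin⟩

end RealSide


/-- The monomial ideal `I = (x^{v_1},…,x^{v_q})` is normal iff the
blocking polyhedron `B(Q)` has the integer decomposition property and every
minimal integer vector of `B(Q)` (w.r.t. the componentwise order) is a column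
of `A`. -/
theorem monomial_ideal_normal_iff_idp_and_minimal_vectors_columns
    (K : Type*) [Field K] (n q : ℕ) (v : Fin q → Fin n → ℕ)
    (I : Ideal (MvPolynomial (Fin n) K))
    (hI : I = Ideal.span {f | ∃ j, f = mono K (v j)}) :
    (∀ i : ℕ, 1 ≤ i →
        I ^ i = Ideal.span {f | ∃ a : Fin n → ℕ, f = mono K a ∧
          ∃ p : ℕ, 0 < p ∧ mono K a ^ p ∈ I ^ (p * i)})
    ↔ (HasIDP (BQ v) ∧
        ∀ a : Fin n → ℕ, (fun i => (a i : ℝ)) ∈ BQ v →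
          (∀ b : Fin n → ℕ, (fun i => (b i : ℝ)) ∈ BQ v → b ≤ a → b = a) →
          ∃ j, a = v j) := by
  rw [normalIdeal_iff K v I hI]
  constructor
  · -- normality ⇒ IDP + minimal vectors are columns
    intro hnorm
    constructor
    · -- IDP
      intro k a hmem
      rcases Nat.eq_zero_or_pos k with rfl | hk
      · -- k = 0
        refine ⟨fun j => Fin.elim0 j, fun j => Fin.elim0 j, ?_⟩
        rcases Set.eq_empty_or_nonempty (BQ v) with hBQ | hBQ
        · rw [Nat.cast_zero, hBQ, Set.smul_set_empty] at hmem
          exact absurd hmem (Set.notMem_empty _)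
        · rw [Nat.cast_zero, Set.zero_smul_set hBQ] at hmem
          funext i
          have h0' := congrFun (Set.mem_zero.mp hmem) i
          simp only [Pi.zero_apply] at h0'
          have h0 : a i = 0 := by exact_mod_cast h0'
          simp [h0]
      · -- k ≥ 1
        obtain ⟨w, hwBQ, hwa⟩ := Set.mem_smul_set.mp hmem
        have hwa' : ∀ i', (k:ℝ) * w i' = (a i' : ℝ) := fun i' => congrFun hwa i'
        have ha0 : ∀ i', 0 ≤ a i' := by
          intro i'
          have h9 : (0:ℝ) ≤ (a i' : ℝ) := by
            rw [← hwa' i']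
            exact mul_nonneg (by positivity) (hwBQ.1 i')
          exact_mod_cast h9
        set aN : Fin n → ℕ := fun i' => (a i').toNat with haN
        have haNc : ∀ i', ((aN i' : ℕ) : ℝ) = ((a i' : ℤ) : ℝ) := by
          intro i'
          have hz : ((aN i' : ℕ) : ℤ) = a i' := Int.toNat_of_nonneg (ha0 i')
          calc ((aN i' : ℕ) : ℝ) = (((aN i' : ℕ) : ℤ) : ℝ) := by norm_cast
            _ = ((a i' : ℤ) : ℝ) := by rw [hz]
        have hBQk : ∀ x ∈ QA v, (k:ℝ) ≤ ∑ i', (aN i' : ℝ) * x i' := by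
          intro x hx
          have h1 : ∑ i', (aN i' : ℝ) * x i' = (k:ℝ) * ∑ i', w i' * x i' := by
            rw [Finset.mul_sum]
            refine Finset.sum_congr rfl fun i' _ => ?_
            rw [haNc, ← hwa' i']; ring
          rw [h1]
          have h2 : 1 ≤ ∑ i', w i' * x i' := hwBQ.2 x hx
          nlinarith [h2, (by exact_mod_cast hk : (0:ℝ) < (k:ℝ))]
        obtain ⟨M, hMcard, hMle⟩ := hnorm k hk aN (BQk_imp_clM v hk aN hBQk)
        set l := M.toList with hl
        have hlen : l.length = k := by rw [hl, Multiset.length_toList, hMcard]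
        set col : Fin k → Fin n → ℤ :=
          fun j i' => (v (l.get (Fin.cast hlen.symm j)) i' : ℤ) with hcol
        have hcolsum : ∀ i', ∑ j : Fin k, col j i'
            = ((M.map fun j' => v j' i').sum : ℤ) := by
          intro i'
          have h3 : (M.map fun j' => v j' i').sum
              = ∑ j : Fin l.length, v (l.get j) i' := by
            conv_lhs => rw [← Multiset.coe_toList M, ← hl]
            rw [Multiset.map_coe, Multiset.sum_coe]
            conv_lhs => rw [← List.ofFn_get l, List.map_ofFn, List.sum_ofFn]
            rfl
          have h4 : ∑ j : Fin l.length, v (l.get j) i'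
              = ∑ j : Fin k, v (l.get (Fin.cast hlen.symm j)) i' := by
            refine Fintype.sum_equiv (finCongr hlen) _ _ fun j => ?_
            congr 1
          rw [h3, h4]
          push_cast
          rfl
        have hcol_le : ∀ i', ∑ j : Fin k, col j i' ≤ a i' := by
          intro i'
          rw [hcolsum]
          have h5 : ((M.map fun j' => v j' i').sum : ℤ) ≤ ((aN i' : ℕ) : ℤ) := by
            exact_mod_cast hMle i'
          have h6 : ((aN i' : ℕ) : ℤ) = a i' := Int.toNat_of_nonneg (ha0 i')
          omega
        set j0 : Fin k := ⟨0, hk⟩ with hj0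
        set F : Fin k → Fin n → ℤ := fun j =>
          if j = j0 then (fun i' => a i' - ∑ jj ∈ Finset.univ.erase j0, col jj i')
          else col j with hF
        have hcolBQ : ∀ j : Fin k, (fun i' => (col j i' : ℝ)) ∈ BQ v := by
          intro j
          have h7 := col_mem_BQ v (l.get (Fin.cast hlen.symm j))
          have heq : (fun i' => ((col j i' : ℤ) : ℝ))
              = fun i' => (v (l.get (Fin.cast hlen.symm j)) i' : ℝ) := by
            funext i'
            simp [hcol]
          rw [heq]
          exact h7
        refine ⟨F, ?_, ?_⟩
        · intro j
          by_cases hj : j = j0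
          · have hge : ∀ i', col j0 i' ≤ a i' - ∑ jj ∈ Finset.univ.erase j0, col jj i' := by
              intro i'
              have h10 := hcol_le i'
              have h7 : col j0 i' + ∑ jj ∈ Finset.univ.erase j0, col jj i'
                  = ∑ jj, col jj i' :=
                Finset.add_sum_erase Finset.univ (fun jj => col jj i') (Finset.mem_univ j0)
              omega
            have heqF : (fun i' => ((F j i' : ℤ) : ℝ))
                = fun i' => ((a i' - ∑ jj ∈ Finset.univ.erase j0, col jj i' : ℤ) : ℝ) := by
              funext i'
              simp [hF, hj]
            rw [heqF]
            refine BQ_up v (hcolBQ j0) fun i' => ?_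
            exact_mod_cast hge i'
          · have heqF : (fun i' => ((F j i' : ℤ) : ℝ)) = fun i' => ((col j i' : ℤ) : ℝ) := by
              funext i'
              simp [hF, hj]
            rw [heqF]
            exact hcolBQ j
        · funext i'
          rw [Finset.sum_apply]
          rw [← Finset.add_sum_erase Finset.univ (fun j => F j i') (Finset.mem_univ j0)]
          have hFj0 : F j0 i' = a i' - ∑ jj ∈ Finset.univ.erase j0, col jj i' := by
            simp [hF]
          have hFoth : ∀ jj ∈ Finset.univ.erase j0, F jj i' = col jj i' := by
            intro jj hjj
            have hne := (Finset.mem_erase.mp hjj).1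
            simp [hF, hne]
          rw [hFj0, Finset.sum_congr rfl hFoth]
          ring
    · -- minimal vectors
      intro a haBQ hamin
      have h1 : ∀ x ∈ QA v, ((1:ℕ) : ℝ) ≤ ∑ i, (a i : ℝ) * x i := by
        intro x hx
        rw [Nat.cast_one]
        exact haBQ.2 x hx
      have hCl : ClM v 1 a := BQk_imp_clM v one_pos a h1
      obtain ⟨M, hM, hle⟩ := hnorm 1 le_rfl a hCl
      obtain ⟨j, rfl⟩ := Multiset.card_eq_one.mp hM
      have hvle : (fun i => v j i) ≤ a := by
        intro i
        simpa using hle i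
      have := hamin (fun i => v j i) (col_mem_BQ v j) hvle
      exact ⟨j, by rw [← this]⟩
  · -- IDP + minimal vectors ⇒ normality
    rintro ⟨hIDP, hmincol⟩ i hi a hCl
    obtain ⟨p, hp, hMem⟩ := hCl
    have hBQk := memM_imp_BQk v hp hMem
    have hipos : (0:ℝ) < (i:ℝ) := by exact_mod_cast hi
    -- a/i ∈ BQ
    have hamem : (fun i' => ((a i' : ℤ) : ℝ)) ∈ ((i:ℕ) : ℝ) • BQ v := by
      refine Set.mem_smul_set.mpr ⟨fun i' => (a i' : ℝ) / (i:ℝ), ⟨?_, ?_⟩, ?_⟩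
      · intro i'
        positivity
      · intro x hx
        have heq : ∑ i', (a i' : ℝ) / (i:ℝ) * x i'
            = (∑ i', (a i' : ℝ) * x i') / (i:ℝ) := by
          rw [Finset.sum_div]
          exact Finset.sum_congr rfl fun i' _ => by ring
        rw [heq, le_div_iff₀ hipos, one_mul]
        exact hBQk x hx
      · funext i'
        simp only [Pi.smul_apply, smul_eq_mul]
        rw [mul_comm, div_mul_cancel₀ _ hipos.ne']
        norm_cast
    obtain ⟨f, hfBQ, hfsum⟩ := hIDP i (fun i' => (a i' : ℤ)) hamem
    -- each f j is nonneg
    have hf0 : ∀ j i', 0 ≤ f j i' := by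
      intro j i'
      have hr : (0:ℝ) ≤ ((f j i' : ℤ) : ℝ) := by simpa using (hfBQ j).1 i'
      exact_mod_cast hr
    set fN : Fin i → Fin n → ℕ := fun j i' => (f j i').toNat with hfN
    have hfNc : ∀ j i', ((fN j i' : ℕ) : ℝ) = ((f j i' : ℤ) : ℝ) := by
      intro j i'
      have hz : ((fN j i' : ℕ) : ℤ) = f j i' := Int.toNat_of_nonneg (hf0 j i')
      calc ((fN j i' : ℕ) : ℝ) = (((fN j i' : ℕ) : ℤ) : ℝ) := by norm_cast
        _ = ((f j i' : ℤ) : ℝ) := by rw [hz]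
    -- choose a minimal vector below each fN j, which must be a column
    have hcols : ∀ j : Fin i, ∃ jq : Fin q, (fun i' => v jq i') ≤ fN j := by
      intro j
      have hfNBQ : (fun i' => (fN j i' : ℝ)) ∈ BQ v := by
        have heqf : (fun i' => ((fN j i' : ℕ) : ℝ)) = fun i' => ((f j i' : ℤ) : ℝ) :=
          funext (hfNc j)
        rw [heqf]
        exact hfBQ j
      obtain ⟨b, hbBQ, hble, hbmin⟩ := exists_minimal v (∑ i', fN j i') (fN j) le_rfl hfNBQ
      obtain ⟨jq, rfl⟩ := hmincol b hbBQ hbmin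
      exact ⟨jq, hble⟩
    choose g hg using hcols
    refine ⟨Multiset.map g Finset.univ.val, ?_, ?_⟩
    · rw [Multiset.card_map]
      simp
    · intro i'
      rw [Multiset.map_map]
      have hch : (Multiset.map ((fun j => v j i') ∘ g) Finset.univ.val).sum
          = ∑ j : Fin i, v (g j) i' := rfl
      rw [hch]
      have hsum2 : ∑ j : Fin i, fN j i' = a i' := by
        have hz : ∑ j : Fin i, f j i' = (a i' : ℤ) := by
          have := congrFun hfsum i'
          rw [this]
          exact (Finset.sum_apply i' Finset.univ f).symm
        have : ((∑ j : Fin i, fN j i' : ℕ) : ℤ) = ((a i' : ℕ) : ℤ) := by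
          push_cast
          rw [← hz]
          exact Finset.sum_congr rfl fun j _ => by
            rw [hfN]
            exact Int.toNat_of_nonneg (hf0 j i')
        exact_mod_cast this
      calc ∑ j : Fin i, v (g j) i' ≤ ∑ j : Fin i, fN j i' :=
            Finset.sum_le_sum fun j _ => hg j i'
        _ = a i' := hsum2
end

section
/- Let v_1,…,v_q ∈ ℕ^n, let A be the n×q matrix with columns v_1,…,v_q, let Q(A) = {x ∈ ℝ^n : x ≥ 0, xA ≥ 1}, and let B(Q) = {z ∈ ℝ^n : z ≥ 0, ⟨z,x⟩ ≥ 1 for all x ∈ Q(A)}. Then B(Q) = ℝ_+^n + conv(v_1,…,v_q), i.e., z ∈ B(Q) if and only if z = δ + c for some δ ∈ ℝ^n with δ ≥ 0 and some c in the convex hull of {v_1,…,v_q}. -/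
open BigOperators Pointwise

private lemma pi_repr' {n : ℕ} (y : Fin n → ℝ) :
    y = ∑ i, y i • (Pi.single i 1 : Fin n → ℝ) := by
  funext k
  simp [Finset.sum_apply, Pi.single_apply]

/-- For `v₁,…,v_q ∈ ℕⁿ`, the blocking polyhedron
`B(Q) = {z ≥ 0 : ⟨z,x⟩ ≥ 1 for all x ∈ Q(A)}` of
`Q(A) = {x ≥ 0 : xA ≥ 1}` equals `ℝ₊ⁿ + conv(v₁,…,v_q)`. -/
theorem blocking_polyhedron_eq_pos_orthant_add_convexHull
    (n q : ℕ) (v : Fin q → Fin n → ℕ) (z : Fin n → ℝ) :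
    ((∀ i, 0 ≤ z i) ∧
      ∀ x : Fin n → ℝ,
        ((∀ i, 0 ≤ x i) ∧ ∀ j, 1 ≤ ∑ i, x i * (v j i : ℝ)) →
          1 ≤ ∑ i, z i * x i)
    ↔ ∃ δ c : Fin n → ℝ, (∀ i, 0 ≤ δ i) ∧
        c ∈ convexHull ℝ {x : Fin n → ℝ | ∃ j, x = fun i => (v j i : ℝ)} ∧
        z = δ + c := by
  set V : Set (Fin n → ℝ) := {x : Fin n → ℝ | ∃ j, x = fun i => (v j i : ℝ)} with hV
  constructor
  · rintro ⟨hz0, hzx⟩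
    rcases Nat.eq_zero_or_pos q with hq | hq
    · exfalso
      have := hzx 0 ⟨fun i => le_refl 0, fun j => absurd j.2 (by omega)⟩
      simp at this; linarith
    set P : Set (Fin n → ℝ) := {δ : Fin n → ℝ | ∀ i, 0 ≤ δ i} with hP
    set S : Set (Fin n → ℝ) := convexHull ℝ V + P with hS
    by_contra hcon
    have hzS : z ∉ S := by
      intro hzs
      rcases Set.mem_add.1 hzs with ⟨c, hc, δ, hδ, hcd⟩
      exact hcon ⟨δ, c, hδ, hc, by rw [← hcd]; funext i; simp [add_comm]⟩
    have hVfin : V.Finite := by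
      have : V ⊆ Set.range (fun j => fun i => (v j i : ℝ)) := by
        rintro x ⟨j, rfl⟩; exact ⟨j, rfl⟩
      exact (Set.finite_range _).subset this
    have hPpi : P = Set.pi Set.univ (fun _ : Fin n => Set.Ici (0:ℝ)) := by
      ext x; simp [hP, Set.mem_pi, Pi.le_def]
    have hPclosed : IsClosed P := by
      rw [hPpi]; exact isClosed_set_pi (fun i _ => isClosed_Ici)
    have hSclosed : IsClosed S :=
      IsClosed.add_left_of_isCompact hPclosed (hVfin.isCompact_convexHull (𝕜 := ℝ))
    have hPconvex : Convex ℝ P := by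
      rw [hPpi]; exact convex_pi (fun i _ => convex_Ici 0)
    have hSconvex : Convex ℝ S := (convex_convexHull ℝ V).add hPconvex
    obtain ⟨f, u, hfz, hfS⟩ := geometric_hahn_banach_point_closed hSconvex hSclosed hzS
    set w : Fin n → ℝ := fun i => f (Pi.single i 1 : Fin n → ℝ) with hw
    have hfrep : ∀ y : Fin n → ℝ, f y = ∑ i, y i * w i := by
      intro y
      conv_lhs => rw [pi_repr' y]
      simp [map_sum, smul_eq_mul, hw]
    have hvS : ∀ j, (fun i => (v j i : ℝ)) ∈ S := by
      intro j
      have h0 : (0 : Fin n → ℝ) ∈ P := fun i => le_refl 0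
      have := Set.add_mem_add (subset_convexHull ℝ V ⟨j, rfl⟩) h0
      simpa using this
    have hw0 : ∀ i, 0 ≤ w i := by
      intro i
      by_contra hneg
      push_neg at hneg
      set a : Fin n → ℝ := fun i' => (v ⟨0, hq⟩ i' : ℝ) with ha
      set t : ℝ := (f a - u + 1) / (-w i) with ht
      have h1 : u < f a := hfS a (hvS ⟨0, hq⟩)
      have htpos : 0 ≤ t := by
        have h2 : 0 < f a - u + 1 := by linarith
        have h3 : 0 < -w i := by linarith
        positivity
      have hδP : t • (Pi.single i 1 : Fin n → ℝ) ∈ P := by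
        intro i'
        by_cases h : i' = i <;> simp [h, Pi.single_apply, htpos]
      have hmem : a + t • (Pi.single i 1 : Fin n → ℝ) ∈ S :=
        Set.add_mem_add (subset_convexHull ℝ V ⟨⟨0, hq⟩, rfl⟩) hδP
      have h4 := hfS _ hmem
      rw [map_add, map_smul, smul_eq_mul] at h4
      have hw' : w i ≠ 0 := ne_of_lt hneg
      have hval : t * w i = -(f a - u + 1) := by
        rw [ht, div_mul_eq_mul_div, mul_div_assoc, div_neg, div_self hw']
        ring
      rw [show f ((Pi.single i 1 : Fin n → ℝ)) = w i from rfl, hval] at h4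
      linarith
    have hfz0 : 0 ≤ f z := by
      rw [hfrep]
      exact Finset.sum_nonneg fun i _ => mul_nonneg (hz0 i) (hw0 i)
    have hu : 0 < u := lt_of_le_of_lt hfz0 hfz
    set x : Fin n → ℝ := fun i => w i / u with hx
    have hxfeas : (∀ i, 0 ≤ x i) ∧ ∀ j, 1 ≤ ∑ i, x i * (v j i : ℝ) := by
      constructor
      · intro i; exact div_nonneg (hw0 i) hu.le
      · intro j
        have h1 : u < f (fun i => (v j i : ℝ)) := hfS _ (hvS j)
        rw [hfrep] at h1
        have h2 : ∑ i, x i * (v j i : ℝ) = (∑ i, (v j i : ℝ) * w i) / u := by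
          rw [Finset.sum_div]
          exact Finset.sum_congr rfl fun i _ => by rw [hx]; ring
        rw [h2, le_div_iff₀ hu]
        linarith
    have h2 := hzx x hxfeas
    have h3 : ∑ i, z i * x i = f z / u := by
      rw [hfrep, Finset.sum_div]
      exact Finset.sum_congr rfl fun i _ => by rw [hx]; ring
    rw [h3, le_div_iff₀ hu] at h2
    linarith
  · rintro ⟨δ, c, hδ, hc, rfl⟩
    have hc0 : ∀ i, 0 ≤ c i := by
      intro i
      have hsub : convexHull ℝ V ⊆ {y : Fin n → ℝ | ∀ i, 0 ≤ y i} := by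
        apply convexHull_min
        · rintro y ⟨j, rfl⟩
          simp only [Set.mem_setOf_eq]
          intro i; positivity
        · intro a ha b hb s t hs ht hst
          simp only [Set.mem_setOf_eq] at ha hb ⊢
          intro i
          have := ha i; have := hb i
          simp only [Pi.add_apply, Pi.smul_apply, smul_eq_mul]
          positivity
      exact hsub hc i
    constructor
    · intro i
      have := hδ i; have := hc0 i
      simp only [Pi.add_apply]; linarith
    · rintro x ⟨hx0, hxv⟩
      have key : convexHull ℝ V ⊆ {y : Fin n → ℝ | 1 ≤ ∑ i, y i * x i} := by
        apply convexHull_min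
        · rintro y ⟨j, rfl⟩
          have h := hxv j
          simp only [Set.mem_setOf_eq]
          calc (1:ℝ) ≤ ∑ i, x i * (v j i : ℝ) := h
            _ = ∑ i, (v j i : ℝ) * x i := Finset.sum_congr rfl fun i _ => mul_comm _ _
        · intro a ha b hb s t hs ht hst
          simp only [Set.mem_setOf_eq] at ha hb ⊢
          have heq : ∑ i, (s • a + t • b) i * x i
              = s * (∑ i, a i * x i) + t * (∑ i, b i * x i) := by
            rw [Finset.mul_sum, Finset.mul_sum, ← Finset.sum_add_distrib]
            exact Finset.sum_congr rfl fun i _ => by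
              simp only [Pi.add_apply, Pi.smul_apply, smul_eq_mul]; ring
          rw [heq]
          nlinarith
      have hcx : 1 ≤ ∑ i, c i * x i := key hc
      have hδx : 0 ≤ ∑ i, δ i * x i :=
        Finset.sum_nonneg fun i _ => mul_nonneg (hδ i) (hx0 i)
      have heq2 : ∑ i, (δ + c) i * x i = (∑ i, δ i * x i) + ∑ i, c i * x i := by
        rw [← Finset.sum_add_distrib]
        exact Finset.sum_congr rfl fun i _ => by simp [add_mul]
      rw [heq2]; linarith
end

section
/- Let I ⊆ R = K[x_1,…,x_n] be the monomial ideal generated by x^{v_1},…,x^{v_q} and let A be the n×q matrix with columns v_1,…,v_q. Then I is normal if and only if the system of linear inequalities x ≥ 0, xA ≥ 1 has the integer rounding property. -/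
open BigOperators Pointwise

/-- The set of values `⟨y,1⟩` of real feasible solutions `y ≥ 0`, `Ay ≤ w` of
the linear program `max{⟨y,1⟩ : y ≥ 0, Ay ≤ w}`. -/
def LPvalues {n q : ℕ} (v : Fin q → Fin n → ℕ) (w : Fin n → ℤ) : Set ℝ :=
  {s | ∃ y : Fin q → ℝ, (∀ j, 0 ≤ y j) ∧
    (∀ i, ∑ j, (v j i : ℝ) * y j ≤ (w i : ℝ)) ∧ s = ∑ j, y j}

/-- The system `x ≥ 0, xA ≥ 1` has the integer rounding property: for each
integer vector `w` for which `max{⟨y,1⟩ : y ≥ 0, Ay ≤ w}` is finite (the LP is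
feasible and bounded), the integer program `max{⟨y,1⟩ : y ∈ ℕ^q, Ay ≤ w}`
attains exactly the floor of that maximum. -/
def IntegerRoundingProperty {n q : ℕ} (v : Fin q → Fin n → ℕ) : Prop :=
  ∀ w : Fin n → ℤ, (LPvalues v w).Nonempty → BddAbove (LPvalues v w) →
    IsGreatest
      {s : ℤ | ∃ y : Fin q → ℕ, (∀ i, ∑ j, (v j i : ℤ) * (y j : ℤ) ≤ w i) ∧
        s = ∑ j, (y j : ℤ)}
      ⌊sSup (LPvalues v w)⌋

namespace NIRP


variable {n q : ℕ} (v : Fin q → Fin n → ℕ)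

def IPge (a : Fin n → ℕ) (m : ℕ) : Prop :=
  ∃ y : Fin q → ℕ, (∀ t, ∑ j, v j t * y j ≤ a t) ∧ m ≤ ∑ j, y j

/-- shrink a nat vector to a prescribed smaller sum -/
lemma shrink : ∀ (k : ℕ) (y : Fin q → ℕ), (∑ j, y j) = k → ∀ m ≤ k,
    ∃ y' : Fin q → ℕ, (∀ j, y' j ≤ y j) ∧ ∑ j, y' j = m := by
  intro k
  induction k with
  | zero => intro y hy m hm
            exact ⟨y, fun j => le_rfl, by omega⟩
  | succ k ih =>
    intro y hy m hm
    rcases eq_or_lt_of_le hm with h | h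
    · exact ⟨y, fun j => le_rfl, by omega⟩
    · -- find a positive coordinate
      have hpos : ∃ j, 0 < y j := by
        by_contra hc
        push_neg at hc
        have : ∑ j, y j = 0 := Finset.sum_eq_zero (fun j _ => Nat.le_zero.mp (hc j))
        omega
      obtain ⟨j0, hj0⟩ := hpos
      set y2 : Fin q → ℕ := Function.update y j0 (y j0 - 1) with hy2
      have hsum2 : ∑ j, y2 j = k := by
        have := Finset.sum_update_of_mem (Finset.mem_univ j0) y (y j0 - 1)
        have h2 : ∑ j, y j = y j0 + ∑ j ∈ Finset.univ.erase j0, y j :=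
          (Finset.add_sum_erase _ y (Finset.mem_univ j0)).symm
        have h3 : Finset.univ \ {j0} = Finset.univ.erase j0 := by
          rw [Finset.sdiff_singleton_eq_erase]
        rw [hy2, this, h3]
        omega
      obtain ⟨y', h1, h2⟩ := ih y2 hsum2 m (by omega)
      refine ⟨y', fun j => ?_, h2⟩
      by_cases hj : j = j0
      · subst hj
        have := h1 j
        simp [hy2, Function.update_self] at this
        omega
      · have := h1 j
        simpa [hy2, Function.update_of_ne hj] using this


/-- exponent vector of the product of generators with multiplicities y -/
noncomputable def expv (y : Fin q → ℕ) : Fin n →₀ ℕ :=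
  Finsupp.equivFunOnFinite.symm (fun t => ∑ j, v j t * y j)

lemma expv_apply (y : Fin q → ℕ) (t : Fin n) : expv v y t = ∑ j, v j t * y j := rfl

lemma expv_add (y₁ y₂ : Fin q → ℕ) : expv v (y₁ + y₂) = expv v y₁ + expv v y₂ := by
  ext t
  simp [expv_apply, Finsupp.add_apply, mul_add, Finset.sum_add_distrib, Pi.add_apply]

lemma sum_eq_one (y : Fin q → ℕ) (h : ∑ j, y j = 1) : ∃ j0, y = Pi.single j0 1 := by
  have hpos : ∃ j, 0 < y j := by
    by_contra hc
    push_neg at hc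
    have : ∑ j, y j = 0 := Finset.sum_eq_zero (fun j _ => Nat.le_zero.mp (hc j))
    omega
  obtain ⟨j0, hj0⟩ := hpos
  have h2 : ∑ j, y j = y j0 + ∑ j ∈ Finset.univ.erase j0, y j :=
    (Finset.add_sum_erase _ y (Finset.mem_univ j0)).symm
  have hz : ∑ j ∈ Finset.univ.erase j0, y j = 0 := by omega
  have hy0 : y j0 = 1 := by omega
  refine ⟨j0, funext fun j => ?_⟩
  by_cases hj : j = j0
  · subst hj; simp [hy0]
  · have : y j = 0 := by
      have := Finset.sum_eq_zero_iff.mp hz j (Finset.mem_erase.mpr ⟨hj, Finset.mem_univ j⟩)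
      exact this
    simp [this, Pi.single_apply, hj]

lemma expv_single (j : Fin q) : expv v (Pi.single j 1) = Finsupp.equivFunOnFinite.symm (v j) := by
  ext t
  rw [expv_apply, Finsupp.coe_equivFunOnFinite_symm]
  simp [Pi.single_apply, mul_ite, mul_one, mul_zero, Finset.sum_ite_eq']

variable (K : Type*) [Field K]

lemma gens_eq :
    {f : MvPolynomial (Fin n) K | ∃ j, f = mono K (v j)} =
      (fun s => MvPolynomial.monomial s (1 : K)) '' (expv v '' {y | ∑ j, y j = 1}) := by
  ext f
  constructor
  · rintro ⟨j, rfl⟩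
    refine ⟨expv v (Pi.single j 1), ⟨Pi.single j 1, by simp, rfl⟩, ?_⟩
    rw [expv_single]; rfl
  · rintro ⟨s, ⟨y, hy, rfl⟩, rfl⟩
    obtain ⟨j0, rfl⟩ := sum_eq_one y hy
    exact ⟨j0, by rw [expv_single]; rfl⟩

lemma pow_span (m : ℕ) :
    (Ideal.span {f : MvPolynomial (Fin n) K | ∃ j, f = mono K (v j)}) ^ m =
      Ideal.span ((fun s => MvPolynomial.monomial s (1 : K)) ''
        (expv v '' {y | ∑ j, y j = m})) := by
  induction m with
  | zero =>
    rw [pow_zero]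
    have h0 : {y : Fin q → ℕ | ∑ j, y j = 0} = {0} := by
      ext y
      simp only [Set.mem_setOf_eq, Set.mem_singleton_iff, Finset.sum_eq_zero_iff,
        Finset.mem_univ, true_implies]
      constructor
      · intro h; funext j; exact h j
      · intro h; subst h; intro j; rfl
    have h1 : expv v (0 : Fin q → ℕ) = 0 := by ext t; simp [expv_apply]
    rw [h0]
    rw [Set.image_singleton, h1, Set.image_singleton]
    have : (MvPolynomial.monomial (0 : Fin n →₀ ℕ) (1 : K)) = 1 := by
      simp [MvPolynomial.monomial_zero']
    rw [this, Ideal.span_singleton_one, Ideal.one_eq_top]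
  | succ m ih =>
    rw [pow_succ, ih, gens_eq (v := v) (K := K), Ideal.span_mul_span']
    congr 1
    ext f
    constructor
    · rintro ⟨g, ⟨s, ⟨y₁, hy₁, rfl⟩, rfl⟩, h, ⟨s', ⟨y₂, hy₂, rfl⟩, rfl⟩, rfl⟩
      refine ⟨expv v (y₁ + y₂), ⟨y₁ + y₂, ?_, rfl⟩, ?_⟩
      · simp only [Set.mem_setOf_eq, Pi.add_apply, Finset.sum_add_distrib]
        simp only [Set.mem_setOf_eq] at hy₁ hy₂
        omega
      · dsimp only
        rw [expv_add, MvPolynomial.monomial_mul, one_mul]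
    · rintro ⟨s, ⟨y, hy, rfl⟩, rfl⟩
      simp only [Set.mem_setOf_eq] at hy
      have hpos : ∃ j, 0 < y j := by
        by_contra hc
        push_neg at hc
        have : ∑ j, y j = 0 := Finset.sum_eq_zero (fun j _ => Nat.le_zero.mp (hc j))
        omega
      obtain ⟨j0, hj0⟩ := hpos
      set y2 : Fin q → ℕ := Function.update y j0 (y j0 - 1) with hy2def
      have hsplit : y = y2 + Pi.single j0 1 := by
        funext j
        by_cases hj : j = j0
        · subst hj; simp [hy2def, Function.update_self]; omega
        · simp [hy2def, Function.update_of_ne hj, Pi.single_apply, hj]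
      have hsum2 : ∑ j, y2 j = m := by
        have h2 : ∑ j, y j = y j0 + ∑ j ∈ Finset.univ.erase j0, y j :=
          (Finset.add_sum_erase _ y (Finset.mem_univ j0)).symm
        have h4 : ∑ j, y2 j = y j0 - 1 + ∑ j ∈ Finset.univ.erase j0, y2 j := by
          rw [hy2def]
          exact (Finset.add_sum_erase _ _ (Finset.mem_univ j0)).symm.trans
            (by rw [Function.update_self])
        have h5 : ∑ j ∈ Finset.univ.erase j0, y2 j = ∑ j ∈ Finset.univ.erase j0, y j :=
          Finset.sum_congr rfl (fun j hj =>
            by rw [hy2def, Function.update_of_ne (Finset.mem_erase.mp hj).1])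
        omega
      refine ⟨MvPolynomial.monomial (expv v y2) (1 : K),
        ⟨expv v y2, ⟨y2, hsum2, rfl⟩, rfl⟩,
        MvPolynomial.monomial (expv v (Pi.single j0 1)) (1 : K),
        ⟨expv v (Pi.single j0 1), ⟨Pi.single j0 1, by simp, rfl⟩, rfl⟩, ?_⟩
      dsimp only
      rw [MvPolynomial.monomial_mul, one_mul, ← expv_add, ← hsplit]

theorem mono_mem_pow_iff (a : Fin n → ℕ) (m : ℕ) :
    mono K a ∈ (Ideal.span {f : MvPolynomial (Fin n) K | ∃ j, f = mono K (v j)}) ^ m ↔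
      IPge v a m := by
  classical
  rw [pow_span, mono, MvPolynomial.mem_ideal_span_monomial_image]
  rw [MvPolynomial.support_monomial]
  simp only [if_neg (one_ne_zero : (1 : K) ≠ 0), Finset.mem_singleton]
  constructor
  · intro h
    obtain ⟨s, ⟨y, hy, rfl⟩, hle⟩ := h _ rfl
    refine ⟨y, fun t => ?_, le_of_eq hy.symm⟩
    have := hle t
    simpa [expv_apply, Finsupp.coe_equivFunOnFinite_symm] using this
  · rintro ⟨y, hfeas, hsum⟩
    intro xi hxi
    subst hxi
    obtain ⟨y', hle, hsum'⟩ := shrink (∑ j, y j) y rfl m hsum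
    refine ⟨expv v y', ⟨y', hsum', rfl⟩, ?_⟩
    intro t
    have h1 : ∑ j, v j t * y' j ≤ ∑ j, v j t * y j :=
      Finset.sum_le_sum (fun j _ => Nat.mul_le_mul_left _ (hle j))
    have h2 := hfeas t
    simpa [expv_apply, Finsupp.coe_equivFunOnFinite_symm] using le_trans h1 h2

lemma mono_pow (a : Fin n → ℕ) (p : ℕ) :
    mono K a ^ p = mono K (fun t => p * a t) := by
  rw [mono, mono, MvPolynomial.monomial_pow, one_pow]
  have h : p • Finsupp.equivFunOnFinite.symm a
      = Finsupp.equivFunOnFinite.symm (fun t => p * a t) := by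
    ext t
    simp [Finsupp.smul_apply, Finsupp.coe_equivFunOnFinite_symm]
  rw [h]

def NumCond : Prop :=
  ∀ i : ℕ, 1 ≤ i → ∀ a : Fin n → ℕ,
    (∃ p : ℕ, 0 < p ∧ IPge v (fun t => p * a t) (p * i)) → IPge v a i

theorem normal_iff_numcond :
    (∀ i : ℕ, 1 ≤ i →
        (Ideal.span {f : MvPolynomial (Fin n) K | ∃ j, f = mono K (v j)}) ^ i =
          Ideal.span {f : MvPolynomial (Fin n) K | ∃ a : Fin n → ℕ, f = mono K a ∧
            ∃ p : ℕ, 0 < p ∧ mono K a ^ p ∈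
              (Ideal.span {f : MvPolynomial (Fin n) K | ∃ j, f = mono K (v j)}) ^ (p * i)}) ↔
      NumCond v := by
  constructor
  · intro h i hi a hpa
    obtain ⟨p, hp, hIP⟩ := hpa
    have hmem : mono K a ∈
        Ideal.span {f : MvPolynomial (Fin n) K | ∃ a : Fin n → ℕ, f = mono K a ∧
          ∃ p : ℕ, 0 < p ∧ mono K a ^ p ∈
            (Ideal.span {f : MvPolynomial (Fin n) K | ∃ j, f = mono K (v j)}) ^ (p * i)} := by
      apply Ideal.subset_span
      refine ⟨a, rfl, p, hp, ?_⟩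
      rw [mono_pow]
      exact (mono_mem_pow_iff v K _ _).mpr hIP
    rw [← h i hi] at hmem
    exact (mono_mem_pow_iff v K _ _).mp hmem
  · intro hN i hi
    apply le_antisymm
    · rw [pow_span]
      apply Ideal.span_le.mpr
      rintro f ⟨s, ⟨y, hy, rfl⟩, rfl⟩
      apply Ideal.subset_span
      refine ⟨fun t => ∑ j, v j t * y j, rfl, 1, one_pos, ?_⟩
      rw [pow_one, one_mul]
      exact (mono_mem_pow_iff v K _ _).mpr ⟨y, fun t => le_rfl, le_of_eq hy.symm⟩
    · apply Ideal.span_le.mpr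
      rintro f ⟨a, rfl, p, hp, hmem⟩
      rw [mono_pow] at hmem
      have hIP : IPge v (fun t => p * a t) (p * i) := (mono_mem_pow_iff v K _ _).mp hmem
      exact (mono_mem_pow_iff v K _ _).mpr (hN i hi a ⟨p, hp, hIP⟩)


/-- A rational linear system with a unique real solution has that solution rational. -/
theorem unique_rat_sol {q : ℕ} {ι : Type*} [Fintype ι] [DecidableEq ι]
    (M : ι → Fin q → ℚ) (b : ι → ℚ) (y : Fin q → ℝ)
    (hy : ∀ i, ∑ j, (M i j : ℝ) * y j = (b i : ℝ))
    (huniq : ∀ z : Fin q → ℝ, (∀ i, ∑ j, (M i j : ℝ) * z j = (b i : ℝ)) → z = y) :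
    ∃ w : Fin q → ℚ, (fun j => (w j : ℝ)) = y := by
  classical
  set φ : (Fin q → ℚ) →ₗ[ℚ] (ι → ℚ) :=
    { toFun := fun z => fun i => ∑ j, M i j * z j
      map_add' := by
        intro z₁ z₂; funext i
        simp [mul_add, Finset.sum_add_distrib]
      map_smul' := by
        intro c z; funext i
        simp [Finset.mul_sum, mul_left_comm] } with hφ
  by_cases hb : b ∈ LinearMap.range φ
  · obtain ⟨w, hw⟩ := hb
    refine ⟨w, huniq _ ?_⟩
    intro i
    have h1 : ∑ j, M i j * w j = b i := congrFun hw i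
    push_cast [← h1]
    rfl
  · exfalso
    obtain ⟨f, hfb, hker⟩ :=
      Submodule.exists_dual_map_eq_bot_of_notMem (p := LinearMap.range φ) hb inferInstance
    set u : ι → ℚ := fun i => f (Pi.single i 1) with hu
    have hf_eq : ∀ x : ι → ℚ, f x = ∑ i, x i * u i := by
      intro x
      conv_lhs => rw [pi_eq_sum_univ x]
      rw [map_sum]
      congr 1
      funext i
      rw [map_smul, smul_eq_mul]
      have h6 : (fun j => if i = j then (1:ℚ) else 0) = Pi.single i 1 := by
        funext j; simp [Pi.single_apply, eq_comm]
      rw [h6]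
    have hzero : ∀ x ∈ LinearMap.range φ, f x = 0 := by
      intro x hx
      have h2 : f x ∈ Submodule.map f (LinearMap.range φ) := Submodule.mem_map_of_mem hx
      rw [hker] at h2
      exact h2
    have hMu : ∀ j, ∑ i, u i * M i j = 0 := by
      intro j
      have h3 : φ (Pi.single j 1) ∈ LinearMap.range φ := LinearMap.mem_range_self _ _
      have h4 := hzero _ h3
      rw [hf_eq] at h4
      have h5 : ∀ i, φ (Pi.single j 1) i = M i j := by
        intro i
        simp only [hφ, LinearMap.coe_mk, AddHom.coe_mk]
        simp [Pi.single_apply, mul_ite, mul_one, mul_zero, Finset.sum_ite_eq']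
      rw [Finset.sum_congr rfl (fun i _ => by rw [h5 i])] at h4
      simpa [mul_comm] using h4
    -- now derive f b = 0 over the reals
    have hreal : ∑ i, (u i : ℚ) * b i = 0 := by
      have hR : ∑ i, (u i : ℝ) * (b i : ℝ) = 0 := by
        calc ∑ i, (u i : ℝ) * (b i : ℝ)
            = ∑ i, (u i : ℝ) * ∑ j, (M i j : ℝ) * y j := by
              refine Finset.sum_congr rfl fun i _ => by rw [hy i]
          _ = ∑ i, ∑ j, (u i : ℝ) * (M i j : ℝ) * y j := by
              refine Finset.sum_congr rfl fun i _ => by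
                rw [Finset.mul_sum]
                refine Finset.sum_congr rfl fun j _ => by ring
          _ = ∑ j, ∑ i, (u i : ℝ) * (M i j : ℝ) * y j := Finset.sum_comm
          _ = ∑ j, (∑ i, (u i : ℝ) * (M i j : ℝ)) * y j := by
              refine Finset.sum_congr rfl fun j _ => by rw [Finset.sum_mul]
          _ = 0 := by
              refine Finset.sum_eq_zero fun j _ => ?_
              have := hMu j
              have hcast : ∑ i, (u i : ℝ) * (M i j : ℝ) = ((∑ i, u i * M i j : ℚ) : ℝ) := by
                push_cast; rfl
              rw [hcast, this]
              simp
      have := hR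
      exact_mod_cast this
    have : f b = 0 := by
      rw [hf_eq]
      rw [← hreal]
      refine Finset.sum_congr rfl fun i _ => mul_comm _ _
    exact hfb this


/-- A nonempty bounded polyhedron with rational data contains a rational point. -/
theorem rat_point {q : ℕ} {ι : Type*} [Fintype ι] [DecidableEq ι]
    (c : ι → Fin q → ℚ) (d : ι → ℚ) (R : ℝ)
    (hbdd : ∀ y : Fin q → ℝ, (∀ i, ∑ j, (c i j : ℝ) * y j ≤ (d i : ℝ)) → ∀ j, |y j| ≤ R)
    (hne : ∃ y : Fin q → ℝ, ∀ i, ∑ j, (c i j : ℝ) * y j ≤ (d i : ℝ)) :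
    ∃ w : Fin q → ℚ, ∀ i, ∑ j, (c i j : ℝ) * (w j : ℝ) ≤ (d i : ℝ) := by
  classical
  set sy : (Fin q → ℝ) → ι → ℝ := fun z i => ∑ j, (c i j : ℝ) * z j with hsy
  have hlin : ∀ (z w : Fin q → ℝ) (θ : ℝ) (i : ι),
      sy (fun j => z j + θ * w j) i = sy z i + θ * sy w i := by
    intro z w θ i
    simp only [hsy, mul_add, Finset.sum_add_distrib, Finset.mul_sum]
    congr 1
    exact Finset.sum_congr rfl fun j _ => by ring
  suffices H : ∀ k : ℕ, ∀ y : Fin q → ℝ, (∀ i, sy y i ≤ d i) →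
      (Finset.univ.filter (fun i => sy y i < d i)).card ≤ k →
      ∃ w : Fin q → ℚ, ∀ i, ∑ j, (c i j : ℝ) * (w j : ℝ) ≤ (d i : ℝ) by
    obtain ⟨y, hy⟩ := hne
    exact H (Fintype.card ι) y hy (le_trans (Finset.card_filter_le _ _) (by rw [Finset.card_univ]))
  intro k
  induction k using Nat.strong_induction_on with
  | _ k ih =>
  intro y hyfeas hcard
  set T : Finset ι := Finset.univ.filter (fun i => sy y i = d i) with hT
  by_cases h1 : ∀ z : Fin q → ℝ, (∀ i ∈ T, sy z i = d i) → z = y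
  -- Case A : y is the unique solution of the tight system, hence rational
  · set M' : ι → Fin q → ℚ := fun i => if i ∈ T then c i else 0 with hM'
    set b' : ι → ℚ := fun i => if i ∈ T then d i else 0 with hb'
    have hsysy : ∀ z : Fin q → ℝ,
        (∀ i, ∑ j, (M' i j : ℝ) * z j = (b' i : ℝ)) ↔ (∀ i ∈ T, sy z i = d i) := by
      intro z
      constructor
      · intro h i hi
        have := h i
        simp only [hM', hb', if_pos hi] at this
        exact this
      · intro h i
        by_cases hi : i ∈ T
        · simp only [hM', hb', if_pos hi]
          exact h i hi
        · simp only [hM', hb', if_neg hi]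
          simp
    have hyy : ∀ i, ∑ j, (M' i j : ℝ) * y j = (b' i : ℝ) := by
      rw [hsysy]
      intro i hi
      exact (Finset.mem_filter.mp hi).2
    obtain ⟨w, hw⟩ := unique_rat_sol M' b' y hyy (fun z hz => h1 z ((hsysy z).mp hz))
    refine ⟨w, fun i => ?_⟩
    have : sy (fun j => (w j : ℝ)) i ≤ d i := by rw [hw]; exact hyfeas i
    exact this
  -- Case B : there is another solution z of the tight system
  · push_neg at h1
    obtain ⟨z, hzT, hzne⟩ := h1
    set dv : Fin q → ℝ := fun j => z j - y j with hdv
    have hdvT : ∀ i ∈ T, sy dv i = 0 := by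
      intro i hi
      have h2 : sy z i = d i := hzT i hi
      have h3 : sy y i = d i := (Finset.mem_filter.mp hi).2
      have : sy z i = sy y i + 1 * sy dv i := by
        rw [← hlin]
        congr 1
        funext j
        simp only [hdv]
        ring
      rw [h2, h3] at this
      linarith
    have hdvne : ∃ j0, dv j0 ≠ 0 := by
      by_contra hc
      push_neg at hc
      exact hzne (funext fun j => by have := hc j; simp [hdv] at this; linarith)
    obtain ⟨j0, hj0⟩ := hdvne
    -- the sets of improvable constraints in directions dv and -dv
    by_cases hS : ∃ e : Fin q → ℝ, (∀ i ∈ T, sy e i = 0) ∧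
        (Finset.univ.filter (fun i => i ∉ T ∧ 0 < sy e i)).Nonempty
    · -- walk to a new tight constraint
      obtain ⟨e, heT, heS⟩ := hS
      set Se := Finset.univ.filter (fun i => i ∉ T ∧ 0 < sy e i) with hSe
      obtain ⟨i0, hi0S, hi0min⟩ :=
        Se.exists_min_image (fun i => (d i - sy y i) / sy e i) heS
      have hi0 := Finset.mem_filter.mp hi0S
      have hse0 : 0 < sy e i0 := hi0.2.2
      have hslack0 : 0 < d i0 - sy y i0 := by
        have hle := hyfeas i0
        have : sy y i0 ≠ d i0 := by
          intro hcon
          exact hi0.2.1 (Finset.mem_filter.mpr ⟨Finset.mem_univ _, hcon⟩)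
        cases lt_or_eq_of_le hle with
        | inl h => linarith
        | inr h => exact absurd h this
      set θ : ℝ := (d i0 - sy y i0) / sy e i0 with hθ
      have hθpos : 0 < θ := div_pos hslack0 hse0
      set y' : Fin q → ℝ := fun j => y j + θ * e j with hy'
      have hy'i : ∀ i, sy y' i = sy y i + θ * sy e i := fun i => hlin y e θ i
      have hy'feas : ∀ i, sy y' i ≤ d i := by
        intro i
        rw [hy'i]
        by_cases hiT : i ∈ T
        · rw [heT i hiT, mul_zero, add_zero]
          exact hyfeas i
        · by_cases hipos : 0 < sy e i
          · have hiS : i ∈ Se := Finset.mem_filter.mpr ⟨Finset.mem_univ _, hiT, hipos⟩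
            have h4 : θ ≤ ((d i : ℝ) - sy y i) / sy e i := hi0min i hiS
            have h5 : θ * sy e i ≤ (((d i : ℝ) - sy y i) / sy e i) * sy e i :=
              mul_le_mul_of_nonneg_right h4 hipos.le
            rw [div_mul_cancel₀ _ (ne_of_gt hipos)] at h5
            linarith
          · push_neg at hipos
            have : θ * sy e i ≤ 0 := mul_nonpos_of_nonneg_of_nonpos (le_of_lt hθpos) hipos
            linarith [hyfeas i]
      have hi0tight : sy y' i0 = d i0 := by
        rw [hy'i, hθ, div_mul_cancel₀ _ (ne_of_gt hse0)]
        ring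
      -- tight constraints stay tight, i0 becomes tight
      have hsub : Finset.univ.filter (fun i => sy y' i < d i) ⊆
          (Finset.univ.filter (fun i => sy y i < d i)).erase i0 := by
        intro i hi
        have hi' := (Finset.mem_filter.mp hi).2
        refine Finset.mem_erase.mpr ⟨?_, ?_⟩
        · intro hcon
          subst hcon
          rw [hi0tight] at hi'
          exact lt_irrefl _ hi'
        · refine Finset.mem_filter.mpr ⟨Finset.mem_univ _, ?_⟩
          by_cases hiT : i ∈ T
          · exfalso
            have := hy'i i
            rw [heT i hiT, mul_zero, add_zero] at this
            rw [this, (Finset.mem_filter.mp hiT).2] at hi'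
            exact lt_irrefl _ hi'
          · cases lt_or_eq_of_le (hyfeas i) with
            | inl h => exact h
            | inr h =>
              exact absurd (Finset.mem_filter.mpr
                ⟨Finset.mem_univ i, h⟩ : i ∈ Finset.univ.filter (fun i' => sy y i' = (d i' : ℝ)))
                hiT
      have hi0mem : i0 ∈ Finset.univ.filter (fun i => sy y i < d i) := by
        refine Finset.mem_filter.mpr ⟨Finset.mem_univ _, by linarith⟩
      have hcard' : (Finset.univ.filter (fun i => sy y' i < d i)).card <
          (Finset.univ.filter (fun i => sy y i < d i)).card := by
        calc (Finset.univ.filter (fun i => sy y' i < d i)).card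
            ≤ ((Finset.univ.filter (fun i => sy y i < d i)).erase i0).card :=
              Finset.card_le_card hsub
          _ < (Finset.univ.filter (fun i => sy y i < d i)).card :=
              Finset.card_erase_lt_of_mem hi0mem
      exact ih (Finset.univ.filter (fun i => sy y' i < d i)).card
        (lt_of_lt_of_le hcard' hcard) y' hy'feas le_rfl
    · -- no improvable constraint in either direction : unbounded line, contradiction
      exfalso
      push_neg at hS
      have hneg : ∀ (w : Fin q → ℝ) (i : ι), sy (fun j => - w j) i = - sy w i := by
        intro w i
        simp [hsy, mul_neg, Finset.sum_neg_distrib]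
      have h5 := hS dv hdvT
      have h6 := hS (fun j => -dv j) (fun i hi => by rw [hneg, hdvT i hi, neg_zero])
      have hzero : ∀ i, sy dv i = 0 := by
        intro i
        by_cases hiT : i ∈ T
        · exact hdvT i hiT
        · have ha : ¬ (0 < sy dv i) := fun hpos =>
            (Finset.not_nonempty_iff_eq_empty.mpr h5) ⟨i, Finset.mem_filter.mpr ⟨Finset.mem_univ _, hiT, hpos⟩⟩
          have hb2 : ¬ (0 < sy (fun j => -dv j) i) := fun hpos =>
            (Finset.not_nonempty_iff_eq_empty.mpr h6) ⟨i, Finset.mem_filter.mpr ⟨Finset.mem_univ _, hiT, hpos⟩⟩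
          rw [hneg] at hb2
          push_neg at ha hb2
          linarith
      -- then y + θ·dv is feasible for every θ, contradicting boundedness
      have hfeasθ : ∀ θ : ℝ, ∀ i, sy (fun j => y j + θ * dv j) i ≤ d i := by
        intro θ i
        rw [hlin, hzero, mul_zero, add_zero]
        exact hyfeas i
      have hR0 : 0 ≤ R := le_trans (abs_nonneg _) (hbdd y hyfeas j0)
      set θ : ℝ := (R + |y j0| + 1) / |dv j0| with hθ
      have habs : 0 < |dv j0| := abs_pos.mpr hj0
      have hb := hbdd _ (hfeasθ θ) j0
      have h7 : |θ * dv j0| = R + |y j0| + 1 := by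
        rw [abs_mul, hθ, abs_div, abs_abs]
        rw [abs_of_nonneg (by positivity : (0:ℝ) ≤ R + |y j0| + 1)]
        field_simp
      have h8 : |θ * dv j0| - |y j0| ≤ |y j0 + θ * dv j0| := by
        have h9 : |θ * dv j0| - |y j0| ≤ |θ * dv j0 + y j0| := by
          simpa using abs_sub_abs_le_abs_sub (θ * dv j0) (-(y j0))
        rw [add_comm] at h9
        exact h9
      rw [h7] at h8
      linarith



/-- clear denominators of a nonnegative rational vector -/
lemma exists_nat_scaling {q : ℕ} (w : Fin q → ℚ) (h0 : ∀ j, 0 ≤ w j) :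
    ∃ (p : ℕ) (z : Fin q → ℕ), 0 < p ∧ ∀ j, (z j : ℚ) = (p : ℚ) * w j := by
  classical
  set p : ℕ := ∏ j, (w j).den with hp
  have hpden : ∀ j, (w j).den ∣ p := fun j => Finset.dvd_prod_of_mem _ (Finset.mem_univ j)
  have hppos : 0 < p := Finset.prod_pos (fun j _ => (w j).pos)
  refine ⟨p, fun j => (p / (w j).den) * (w j).num.toNat, hppos, fun j => ?_⟩
  have hnum : ((w j).num.toNat : ℤ) = (w j).num := Int.toNat_of_nonneg (Rat.num_nonneg.mpr (h0 j))
  have hden : ((w j).den : ℚ) * w j = (w j).num := by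
    rw [mul_comm]
    exact_mod_cast Rat.mul_den_eq_num (w j)
  have hdiv : ((p / (w j).den : ℕ) : ℚ) * ((w j).den : ℚ) = (p : ℚ) := by
    rw [← Nat.cast_mul, Nat.div_mul_cancel (hpden j)]
  rw [Nat.cast_mul]
  have h2 : ((w j).num.toNat : ℚ) = ((w j).num : ℚ) := by exact_mod_cast hnum
  rw [h2]
  calc ((p / (w j).den : ℕ) : ℚ) * ((w j).num : ℚ)
      = ((p / (w j).den : ℕ) : ℚ) * (((w j).den : ℚ) * w j) := by rw [hden]
    _ = (((p / (w j).den : ℕ) : ℚ) * ((w j).den : ℚ)) * w j := by ring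
    _ = (p : ℚ) * w j := by rw [hdiv]

/-- round a nonnegative real vector down to a rational one, almost preserving the sum -/
lemma round_down {q : ℕ} (y : Fin q → ℝ) (h0 : ∀ j, 0 ≤ y j) (m : ℝ)
    (hm : m < ∑ j, y j) :
    ∃ w : Fin q → ℚ, (∀ j, 0 ≤ w j) ∧ (∀ j, (w j : ℝ) ≤ y j) ∧ m < ∑ j, (w j : ℝ) := by
  set δ : ℝ := (∑ j, y j - m) / (q + 1) with hδ
  have hδpos : 0 < δ := by
    apply div_pos (by linarith) (by positivity)
  have hchoice : ∀ j, ∃ r : ℚ, 0 ≤ r ∧ (r : ℝ) ≤ y j ∧ y j - δ ≤ (r : ℝ) := by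
    intro j
    by_cases hyj : y j ≤ δ
    · exact ⟨0, le_rfl, by exact_mod_cast h0 j, by push_cast; linarith⟩
    · push_neg at hyj
      obtain ⟨r, hr1, hr2⟩ := exists_rat_btwn (by linarith : y j - δ < y j)
      refine ⟨r, ?_, le_of_lt hr2, le_of_lt hr1⟩
      have : (0:ℝ) ≤ (r:ℝ) := by linarith
      exact_mod_cast this
  choose r hr0 hrle hrge using hchoice
  refine ⟨r, hr0, hrle, ?_⟩
  have hsum : ∑ j, (y j - δ) ≤ ∑ j, (r j : ℝ) := Finset.sum_le_sum (fun j _ => hrge j)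
  have hq : ∑ j, (y j - δ) = ∑ j, y j - q * δ := by
    rw [Finset.sum_sub_distrib]
    simp [Finset.sum_const, Finset.card_univ, nsmul_eq_mul]
  have hqd : (q : ℝ) * δ < ∑ j, y j - m := by
    rw [hδ]
    rw [div_eq_inv_mul, ← mul_assoc]
    have h1 : (q : ℝ) * ((q:ℝ) + 1)⁻¹ < 1 := by
      rw [mul_inv_lt_iff₀ (by positivity)]
      linarith
    calc (q:ℝ) * ((q:ℝ)+1)⁻¹ * (∑ j, y j - m) < 1 * (∑ j, y j - m) := by
          apply mul_lt_mul_of_pos_right h1 (by linarith)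
      _ = ∑ j, y j - m := one_mul _
  linarith


/-- a rational point in the optimal face -/
lemma rat_in_face {n q : ℕ} (v : Fin q → Fin n → ℕ) (a : Fin n → ℕ) (m : ℕ)
    (hne : ∃ y : Fin q → ℝ, (∀ j, 0 ≤ y j) ∧
      (∀ t, ∑ j, (v j t : ℝ) * y j ≤ (a t : ℝ)) ∧ ∑ j, y j = (m:ℝ)) :
    ∃ r : Fin q → ℚ, (∀ j, 0 ≤ r j) ∧
      (∀ t, ∑ j, (v j t : ℝ) * (r j : ℝ) ≤ (a t : ℝ)) ∧ ∑ j, (r j : ℝ) = (m:ℝ) := by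
  classical
  set c : (Fin q ⊕ (Fin n ⊕ Bool)) → Fin q → ℚ :=
    Sum.elim (fun j => fun j' => if j' = j then -1 else 0)
      (Sum.elim (fun t => fun j => (v j t : ℚ))
        (fun b => fun _ => if b then 1 else -1)) with hc
  set dd : (Fin q ⊕ (Fin n ⊕ Bool)) → ℚ :=
    Sum.elim (fun _ => 0)
      (Sum.elim (fun t => (a t : ℚ)) (fun b => if b then (m:ℚ) else -(m:ℚ))) with hdd
  have hrow1 : ∀ (y : Fin q → ℝ) (j : Fin q),
      ∑ j', ((c (Sum.inl j) j' : ℚ) : ℝ) * y j' = - y j := by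
    intro y j
    rw [Finset.sum_eq_single j]
    · simp [hc]
    · intro b _ hb
      simp [hc, hb]
    · intro h; exact absurd (Finset.mem_univ j) h
  have hrow2 : ∀ (y : Fin q → ℝ) (t : Fin n),
      ∑ j, ((c (Sum.inr (Sum.inl t)) j : ℚ) : ℝ) * y j = ∑ j, (v j t : ℝ) * y j := by
    intro y t
    refine Finset.sum_congr rfl fun j _ => ?_
    simp [hc]
  have hrow3 : ∀ (y : Fin q → ℝ) (b : Bool),
      ∑ j, ((c (Sum.inr (Sum.inr b)) j : ℚ) : ℝ) * y j
        = (if b then 1 else -1) * ∑ j, y j := by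
    intro y b
    rw [Finset.mul_sum]
    refine Finset.sum_congr rfl fun j _ => ?_
    cases b <;> simp [hc]
  have hd1 : ∀ j : Fin q, ((dd (Sum.inl j) : ℚ) : ℝ) = 0 := by intro j; simp [hdd]
  have hd2 : ∀ t : Fin n, ((dd (Sum.inr (Sum.inl t)) : ℚ) : ℝ) = (a t : ℝ) := by
    intro t; simp [hdd]
  have hd3 : ∀ b : Bool, ((dd (Sum.inr (Sum.inr b)) : ℚ) : ℝ)
      = (if b then 1 else -1) * (m:ℝ) := by
    intro b; cases b <;> simp [hdd]
  have hfeas_iff : ∀ y : Fin q → ℝ,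
      (∀ i, ∑ j, ((c i j : ℚ) : ℝ) * y j ≤ ((dd i : ℚ) : ℝ)) ↔
      ((∀ j, 0 ≤ y j) ∧ (∀ t, ∑ j, (v j t : ℝ) * y j ≤ (a t : ℝ)) ∧
        ∑ j, y j = (m : ℝ)) := by
    intro y
    constructor
    · intro h
      refine ⟨fun j => ?_, fun t => ?_, ?_⟩
      · have h1 := h (Sum.inl j)
        rw [hrow1, hd1] at h1
        linarith
      · have h1 := h (Sum.inr (Sum.inl t))
        rw [hrow2, hd2] at h1
        exact h1
      · have h1 := h (Sum.inr (Sum.inr true))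
        have h2 := h (Sum.inr (Sum.inr false))
        rw [hrow3, hd3] at h1 h2
        norm_num at h1 h2
        linarith
    · rintro ⟨h1, h2, h3⟩ i
      rcases i with j | t | b
      · rw [hrow1, hd1]
        linarith [h1 j]
      · rw [hrow2, hd2]
        exact h2 t
      · rw [hrow3, hd3]
        cases b <;> norm_num <;> linarith
  have hRb : ∀ y : Fin q → ℝ,
      (∀ i, ∑ j, ((c i j : ℚ) : ℝ) * y j ≤ ((dd i : ℚ) : ℝ)) → ∀ j, |y j| ≤ (m:ℝ) := by
    intro y hy j
    obtain ⟨h1, h2, h3⟩ := (hfeas_iff y).mp hy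
    have h4 : y j ≤ ∑ j', y j' :=
      Finset.single_le_sum (fun j' _ => h1 j') (Finset.mem_univ j)
    rw [abs_of_nonneg (h1 j)]
    linarith
  obtain ⟨y0, hy0⟩ := hne
  obtain ⟨r, hr⟩ := rat_point c dd (m:ℝ) hRb ⟨y0, (hfeas_iff y0).mpr hy0⟩
  obtain ⟨hr1, hr2, hr3⟩ := (hfeas_iff (fun j => (r j : ℝ))).mp hr
  exact ⟨r, fun j => by exact_mod_cast hr1 j, hr2, hr3⟩


theorem irp_to_numcond : IntegerRoundingProperty v → NumCond v := by
  intro hR i hi a hpre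
  obtain ⟨p, hp, z, hzf, hzs⟩ := hpre
  by_cases hcol : ∃ j0, ∀ t, v j0 t = 0
  · obtain ⟨j0, hj0⟩ := hcol
    refine ⟨fun j => if j = j0 then i else 0, fun t => ?_, ?_⟩
    · have h1 : ∑ j, v j t * (if j = j0 then i else 0) = 0 :=
        Finset.sum_eq_zero (fun j _ => by
          by_cases h : j = j0
          · subst h; rw [if_pos rfl, hj0 t, Nat.zero_mul]
          · rw [if_neg h, Nat.mul_zero])
      show ∑ j, v j t * (if j = j0 then i else 0) ≤ a t
      rw [h1]
      exact Nat.zero_le _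
    · simp
  · push_neg at hcol
    set w : Fin n → ℤ := fun t => (a t : ℤ) with hw
    have hne : (LPvalues v w).Nonempty := by
      refine ⟨0, 0, fun j => le_rfl, fun t => ?_, by simp⟩
      simp only [Pi.zero_apply, mul_zero, Finset.sum_const_zero, hw]
      positivity
    have hbdd : BddAbove (LPvalues v w) := by
      refine ⟨(q : ℝ) * ∑ t, (a t : ℝ), ?_⟩
      rintro s ⟨y, hy0, hyf, rfl⟩
      have hyb : ∀ j, y j ≤ ∑ t, (a t : ℝ) := by
        intro j
        obtain ⟨t0, ht0⟩ := hcol j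
        have h1 : (1:ℝ) ≤ (v j t0 : ℝ) := by
          exact_mod_cast Nat.one_le_iff_ne_zero.mpr ht0
        have h2 : y j ≤ (v j t0 : ℝ) * y j := le_mul_of_one_le_left (hy0 j) h1
        have h3 : (v j t0 : ℝ) * y j ≤ ∑ j', (v j' t0 : ℝ) * y j' :=
          Finset.single_le_sum (f := fun j' => (v j' t0 : ℝ) * y j')
            (fun j' _ => mul_nonneg (by positivity) (hy0 j')) (Finset.mem_univ j)
        have h4 := hyf t0
        have h5 : (w t0 : ℝ) = (a t0 : ℝ) := by simp [hw]
        have h6 : (a t0 : ℝ) ≤ ∑ t, (a t : ℝ) :=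
          Finset.single_le_sum (f := fun t => (a t : ℝ)) (fun t _ => by positivity)
            (Finset.mem_univ t0)
        rw [h5] at h4
        linarith
      calc ∑ j, y j ≤ ∑ _j : Fin q, ∑ t, (a t : ℝ) := Finset.sum_le_sum (fun j _ => hyb j)
        _ = (q : ℝ) * ∑ t, (a t : ℝ) := by
            rw [Finset.sum_const, Finset.card_univ, Fintype.card_fin, nsmul_eq_mul]
    have hG := hR w hne hbdd
    have hppos : (0:ℝ) < (p:ℝ) := by exact_mod_cast hp
    have hsge : (i:ℝ) ≤ sSup (LPvalues v w) := by
      have hmem : (∑ j, (z j : ℝ)) / (p:ℝ) ∈ LPvalues v w := by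
        refine ⟨fun j => (z j : ℝ) / (p:ℝ), fun j => by positivity, fun t => ?_, ?_⟩
        · have h1 : ∑ j, v j t * z j ≤ p * a t := hzf t
          have h2 : ∑ j, (v j t : ℝ) * ((z j : ℝ) / (p:ℝ))
              = (∑ j, (v j t : ℝ) * (z j : ℝ)) / (p:ℝ) := by
            rw [Finset.sum_div]
            exact Finset.sum_congr rfl fun j _ => by ring
          rw [h2, div_le_iff₀ hppos]
          have h3 : ((∑ j, v j t * z j : ℕ) : ℝ) ≤ ((p * a t : ℕ) : ℝ) := by exact_mod_cast h1
          push_cast at h3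
          have h5 : (w t : ℝ) = (a t : ℝ) := by simp [hw]
          rw [h5]
          linarith
        · rw [Finset.sum_div]
      have h7 : (i:ℝ) ≤ (∑ j, (z j : ℝ)) / (p:ℝ) := by
        rw [le_div_iff₀ hppos]
        have h8 : ((p * i : ℕ) : ℝ) ≤ ((∑ j, z j : ℕ) : ℝ) := by exact_mod_cast hzs
        push_cast at h8
        linarith
      exact le_trans h7 (le_csSup hbdd hmem)
    obtain ⟨⟨y, hyf, hys⟩, _⟩ := hG
    have hfl : (i:ℤ) ≤ ⌊sSup (LPvalues v w)⌋ := Int.le_floor.mpr (by exact_mod_cast hsge)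
    refine ⟨y, fun t => ?_, ?_⟩
    · have h9 := hyf t
      have h10 : ((∑ j, v j t * y j : ℕ) : ℤ) ≤ (a t : ℤ) := by
        push_cast
        simpa [hw] using h9
      exact_mod_cast h10
    · have h11 : (i:ℤ) ≤ ∑ j, (y j : ℤ) := hys ▸ hfl
      exact_mod_cast h11

theorem numcond_to_irp : NumCond v → IntegerRoundingProperty v := by
  intro hN w hne hbdd
  obtain ⟨s₀, y₀, hy₀0, hy₀f, hs₀⟩ := hne
  have hw0 : ∀ t, (0:ℤ) ≤ w t := by
    intro t
    have h1 : (0:ℝ) ≤ ∑ j, (v j t : ℝ) * y₀ j :=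
      Finset.sum_nonneg fun j _ => mul_nonneg (by positivity) (hy₀0 j)
    exact_mod_cast le_trans h1 (hy₀f t)
  set a : Fin n → ℕ := fun t => (w t).toNat with ha
  have haw : ∀ t, ((a t : ℤ)) = w t := fun t => Int.toNat_of_nonneg (hw0 t)
  have hawR : ∀ t, ((a t : ℝ)) = (w t : ℝ) := by
    intro t
    exact_mod_cast congrArg (fun x : ℤ => (x : ℝ)) (haw t)
  have hmem0 : (0:ℝ) ∈ LPvalues v w := by
    refine ⟨0, fun j => le_rfl, fun t => ?_, by simp⟩
    simp only [Pi.zero_apply, mul_zero, Finset.sum_const_zero]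
    exact_mod_cast hw0 t
  have hs0 : 0 ≤ sSup (LPvalues v w) := le_csSup hbdd hmem0
  set m : ℕ := (⌊sSup (LPvalues v w)⌋).toNat with hm
  have hmz : (m:ℤ) = ⌊sSup (LPvalues v w)⌋ := Int.toNat_of_nonneg (Int.floor_nonneg.mpr hs0)
  have claim : ∃ zf : Fin q → ℕ, (∀ t, ∑ j, v j t * zf j ≤ a t) ∧ ∑ j, zf j = m := by
    rcases Nat.eq_zero_or_pos m with hm0 | hmpos
    · exact ⟨0, fun t => by simp, by simp [hm0]⟩
    · have hpre : ∃ p : ℕ, 0 < p ∧ IPge v (fun t => p * a t) (p * m) := by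
        by_cases hcase : ∃ y : Fin q → ℝ, (∀ j, 0 ≤ y j) ∧
            (∀ t, ∑ j, (v j t : ℝ) * y j ≤ (w t : ℝ)) ∧ (m:ℝ) < ∑ j, y j
        · obtain ⟨y, hy0, hyf, hym⟩ := hcase
          obtain ⟨r, hr0, hrle, hrm⟩ := round_down y hy0 (m:ℝ) hym
          obtain ⟨p, z, hp, hz⟩ := exists_nat_scaling r hr0
          have hppos : (0:ℝ) < (p:ℝ) := by exact_mod_cast hp
          have hzR : ∀ j, (z j : ℝ) = (p:ℝ) * (r j : ℝ) := by
            intro j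
            exact_mod_cast congrArg (fun x : ℚ => (x : ℝ)) (hz j)
          refine ⟨p, hp, z, fun t => ?_, ?_⟩
          · have h1 : ∑ j, (v j t : ℝ) * (r j : ℝ) ≤ (w t : ℝ) :=
              le_trans (Finset.sum_le_sum fun j _ =>
                mul_le_mul_of_nonneg_left (hrle j) (by positivity)) (hyf t)
            have h2 : ((∑ j, v j t * z j : ℕ) : ℝ) = (p:ℝ) * ∑ j, (v j t : ℝ) * (r j : ℝ) := by
              push_cast
              rw [Finset.mul_sum]
              refine Finset.sum_congr rfl fun j _ => ?_
              rw [hzR j]; ring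
            have h3 : ((∑ j, v j t * z j : ℕ) : ℝ) ≤ ((p * a t : ℕ) : ℝ) := by
              rw [h2]
              push_cast
              rw [hawR t]
              exact mul_le_mul_of_nonneg_left h1 (le_of_lt hppos)
            exact_mod_cast h3
          · have h4 : ((p * m : ℕ) : ℝ) < ((∑ j, z j : ℕ) : ℝ) := by
              push_cast
              have h5 : ∑ j, (z j : ℝ) = (p:ℝ) * ∑ j, (r j : ℝ) := by
                rw [Finset.mul_sum]
                exact Finset.sum_congr rfl fun j _ => hzR j
              rw [h5]
              exact mul_lt_mul_of_pos_left hrm hppos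
            have h6 : p * m < ∑ j, z j := by exact_mod_cast h4
            exact le_of_lt h6
        · push_neg at hcase
          have hsle : sSup (LPvalues v w) ≤ (m:ℝ) := by
            apply csSup_le ⟨0, hmem0⟩
            rintro s ⟨y, h1, h2, rfl⟩
            exact hcase y h1 h2
          have hmle : (m:ℝ) ≤ sSup (LPvalues v w) := by
            have h1 := Int.floor_le (sSup (LPvalues v w))
            rw [← hmz] at h1
            exact_mod_cast h1
          -- compactness : the maximum is attained
          set P : Set (Fin q → ℝ) :=
            {y | (∀ j, 0 ≤ y j) ∧ ∀ t, ∑ j, (v j t : ℝ) * y j ≤ (w t : ℝ)} with hP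
          have hPne : P.Nonempty := by
            refine ⟨0, fun j => le_rfl, fun t => ?_⟩
            simp only [Pi.zero_apply, mul_zero, Finset.sum_const_zero]
            exact_mod_cast hw0 t
          have hPsub : ∀ y ∈ P, ∀ j, |y j| ≤ (m:ℝ) := by
            rintro y ⟨hy1, hy2⟩ j
            have h1 : y j ≤ ∑ j', y j' :=
              Finset.single_le_sum (fun j' _ => hy1 j') (Finset.mem_univ j)
            have h2 : ∑ j', y j' ≤ (m:ℝ) := hcase y hy1 hy2
            rw [abs_of_nonneg (hy1 j)]
            linarith
          have hPclosed : IsClosed P := by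
            have h1 : P = (⋂ j, {y : Fin q → ℝ | 0 ≤ y j}) ∩
                (⋂ t, {y : Fin q → ℝ | ∑ j, (v j t : ℝ) * y j ≤ (w t : ℝ)}) := by
              ext y
              simp only [hP, Set.mem_setOf_eq, Set.mem_inter_iff, Set.mem_iInter]
            rw [h1]
            apply IsClosed.inter
            · exact isClosed_iInter fun j =>
                isClosed_le continuous_const (continuous_apply j)
            · exact isClosed_iInter fun t =>
                isClosed_le (by continuity) continuous_const
          have hPbdd : Bornology.IsBounded P := by
            apply Bornology.IsBounded.subset (Metric.isBounded_closedBall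
              (x := (0 : Fin q → ℝ)) (r := (m:ℝ)))
            intro y hy
            rw [Metric.mem_closedBall, dist_zero_right]
            rw [pi_norm_le_iff_of_nonneg (by positivity)]
            intro j
            rw [Real.norm_eq_abs]
            exact hPsub y hy j
          have hPc : IsCompact P := Metric.isCompact_of_isClosed_isBounded hPclosed hPbdd
          obtain ⟨ystar, hystarP, hystarmax⟩ := hPc.exists_isMaxOn hPne
            ((continuous_finset_sum _ fun j _ => continuous_apply j).continuousOn
              (f := fun (y : Fin q → ℝ) => ∑ j, y j))
          have hystarsum : ∑ j, ystar j = (m:ℝ) := by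
            refine le_antisymm (hcase ystar hystarP.1 hystarP.2) ?_
            have hub : ∀ s ∈ LPvalues v w, s ≤ ∑ j, ystar j := by
              rintro s ⟨y, h1, h2, rfl⟩
              exact hystarmax ⟨h1, h2⟩
            have h3 := csSup_le ⟨0, hmem0⟩ hub
            linarith
          obtain ⟨r, hr1, hr2, hr3⟩ := rat_in_face v a m
            ⟨ystar, hystarP.1, fun t => by rw [hawR t]; exact hystarP.2 t, hystarsum⟩
          have hr0 : ∀ j, 0 ≤ r j := fun j => by exact_mod_cast hr1 j
          obtain ⟨p, z, hp, hz⟩ := exists_nat_scaling r hr0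
          have hppos : (0:ℝ) < (p:ℝ) := by exact_mod_cast hp
          have hzR : ∀ j, (z j : ℝ) = (p:ℝ) * (r j : ℝ) := by
            intro j
            exact_mod_cast congrArg (fun x : ℚ => (x : ℝ)) (hz j)
          refine ⟨p, hp, z, fun t => ?_, ?_⟩
          · have h3 : ((∑ j, v j t * z j : ℕ) : ℝ) ≤ ((p * a t : ℕ) : ℝ) := by
              push_cast
              have h2 : ∑ j, (v j t : ℝ) * (z j : ℝ)
                  = (p:ℝ) * ∑ j, (v j t : ℝ) * (r j : ℝ) := by
                rw [Finset.mul_sum]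
                refine Finset.sum_congr rfl fun j _ => ?_
                rw [hzR j]; ring
              rw [h2]
              exact mul_le_mul_of_nonneg_left (hr2 t) (le_of_lt hppos)
            exact_mod_cast h3
          · have h4 : ((p * m : ℕ) : ℝ) = ((∑ j, z j : ℕ) : ℝ) := by
              push_cast
              have h5 : ∑ j, (z j : ℝ) = (p:ℝ) * ∑ j, (r j : ℝ) := by
                rw [Finset.mul_sum]
                exact Finset.sum_congr rfl fun j _ => hzR j
              rw [h5, hr3]
            have h6 : p * m = ∑ j, z j := by exact_mod_cast h4
            exact le_of_eq h6
      obtain ⟨z1, hz1f, hz1s⟩ := hN m hmpos a hpre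
      obtain ⟨zf, hle, hsum⟩ := shrink (∑ j, z1 j) z1 rfl m hz1s
      exact ⟨zf, fun t => le_trans
        (Finset.sum_le_sum fun j _ => Nat.mul_le_mul_left _ (hle j)) (hz1f t), hsum⟩
  obtain ⟨zf, hzf, hzs⟩ := claim
  constructor
  · refine ⟨zf, fun t => ?_, ?_⟩
    · have h1 : ((∑ j, v j t * zf j : ℕ) : ℤ) ≤ (a t : ℤ) := by exact_mod_cast hzf t
      rw [haw t] at h1
      push_cast at h1
      exact_mod_cast h1
    · rw [← hmz]
      exact_mod_cast hzs.symm
  · rintro s ⟨y, hyf, rfl⟩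
    have hmem : (Int.cast (∑ j, (y j : ℤ)) : ℝ) ∈ LPvalues v w := by
      refine ⟨fun j => (y j : ℝ), fun j => by positivity, fun t => ?_, ?_⟩
      · have h1 := hyf t
        have h2 : ((∑ j, (v j t : ℤ) * (y j : ℤ) : ℤ) : ℝ) ≤ ((w t : ℤ) : ℝ) := by
          exact_mod_cast h1
        push_cast at h2 ⊢
        exact h2
      · push_cast
        rfl
    exact Int.le_floor.mpr (le_csSup hbdd hmem)


end NIRP

/-- The monomial ideal `I = (x^{v_1},…,x^{v_q})` is normal iff
the system `x ≥ 0, xA ≥ 1` has the integer rounding property. -/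
theorem monomial_ideal_normal_iff_integer_rounding
    (K : Type*) [Field K] (n q : ℕ) (v : Fin q → Fin n → ℕ)
    (I : Ideal (MvPolynomial (Fin n) K))
    (hI : I = Ideal.span {f | ∃ j, f = mono K (v j)}) :
    (∀ i : ℕ, 1 ≤ i →
        I ^ i = Ideal.span {f | ∃ a : Fin n → ℕ, f = mono K a ∧
          ∃ p : ℕ, 0 < p ∧ mono K a ^ p ∈ I ^ (p * i)})
    ↔ IntegerRoundingProperty v := by
  subst hI
  rw [NIRP.normal_iff_numcond v K]
  exact ⟨NIRP.numcond_to_irp v, NIRP.irp_to_numcond v⟩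
end

section
/- Let G be a finite simple graph with vertex x_1, let G^1 be the graph obtained from G by duplicating x_1 (adding a new vertex y_1 adjacent exactly to the neighbors of x_1, and not adjacent to x_1), let cl(G) be the clutter of maximal cliques of G, and let cl(G)^1 be the clutter obtained from cl(G) by duplicating the vertex x_1 by y_1. Then cl(G)^1 = cl(G^1): a set is an edge of cl(G)^1 if and only if it is a maximal clique of G^1. -/
/-- `s` is a maximal clique of the graph `G`. -/
def IsMaxClique {V : Type*} (G : SimpleGraph V) (s : Set V) : Prop :=
  G.IsClique s ∧ ∀ t : Set V, G.IsClique t → s ⊆ t → s = t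

/-- The graph obtained from `G` by duplicating the vertex `x₁`: a new vertex
(`none`) is added whose neighbourhood is exactly the neighbourhood of `x₁`
(in particular it is not adjacent to `x₁`). The original vertices are the
`some` vertices. -/
def dupGraph {V : Type*} (G : SimpleGraph V) (x₁ : V) : SimpleGraph (Option V) :=
  SimpleGraph.fromRel fun a b => G.Adj (a.getD x₁) (b.getD x₁)

section Aux

variable {V : Type*} (G : SimpleGraph V) (x₁ : V)

lemma dup_adj_some_some {a b : V} :
    (dupGraph G x₁).Adj (some a) (some b) ↔ G.Adj a b := by
  simp only [dupGraph, SimpleGraph.fromRel_adj, Option.getD_some, ne_eq,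
    Option.some.injEq]
  constructor
  · rintro ⟨h, h1 | h1⟩
    · exact h1
    · exact h1.symm
  · intro h
    exact ⟨h.ne, Or.inl h⟩

lemma dup_adj_none_some {b : V} :
    (dupGraph G x₁).Adj none (some b) ↔ G.Adj x₁ b := by
  simp only [dupGraph, SimpleGraph.fromRel_adj, Option.getD_some, Option.getD_none, ne_eq]
  constructor
  · rintro ⟨h, h1 | h1⟩
    · exact h1
    · exact h1.symm
  · intro h
    exact ⟨by simp, Or.inl h⟩

lemma dup_clique_image_some {e : Set V} (he : G.IsClique e) :
    (dupGraph G x₁).IsClique (some '' e) := by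
  rintro _ ⟨a, ha, rfl⟩ _ ⟨b, hb, rfl⟩ hne
  rw [dup_adj_some_some]
  exact he ha hb (fun h => hne (by rw [h]))

lemma dup_clique_insert_none {e : Set V} (he : G.IsClique e)
    (hadj : ∀ a ∈ e, G.Adj x₁ a) :
    (dupGraph G x₁).IsClique (insert none (some '' e)) := by
  have := dup_clique_image_some G x₁ he
  refine this.insert ?_
  rintro _ ⟨a, ha, rfl⟩ _
  exact (dup_adj_none_some G x₁).mpr (hadj a ha)

lemma dup_clique_preimage {s : Set (Option V)} (hs : (dupGraph G x₁).IsClique s) :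
    G.IsClique {a | some a ∈ s} := by
  intro a ha b hb hne
  rw [← dup_adj_some_some G x₁]
  exact hs ha hb (by simpa using hne)

lemma dup_not_mem_x₁ {s : Set (Option V)} (hs : (dupGraph G x₁).IsClique s)
    (hn : none ∈ s) : some x₁ ∉ s := by
  intro hx
  have := hs hn hx (by simp)
  rw [dup_adj_none_some] at this
  exact G.irrefl this

lemma dup_adj_of_none_mem {s : Set (Option V)} (hs : (dupGraph G x₁).IsClique s)
    (hn : none ∈ s) {a : V} (ha : some a ∈ s) : G.Adj x₁ a := by
  rw [← dup_adj_none_some G x₁]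
  exact hs hn ha (by simp)

lemma set_eq_image_of_none_not_mem {s : Set (Option V)} (hn : none ∉ s) :
    s = some '' {a | some a ∈ s} := by
  ext x
  cases x with
  | none => simp [hn]
  | some a => simp

lemma set_eq_insert_none_of_none_mem {s : Set (Option V)} (hn : none ∈ s) :
    s = insert none (some '' {a | some a ∈ s}) := by
  ext x
  cases x with
  | none => simp [hn]
  | some a => simp

end Aux

/-- For a finite graph `G` with vertex `x₁`, the clutter obtained
from the clique clutter `cl(G)` by duplicating `x₁` equals the clique clutter
of the graph `G¹` obtained from `G` by duplicating `x₁`: a set of vertices is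
an edge of `cl(G)¹` (i.e. is a maximal clique `e` of `G`, or is
`(e ∖ {x₁}) ∪ {y₁}` for a maximal clique `e` of `G` containing `x₁`) iff it
is a maximal clique of `G¹`. -/
theorem cliqueClutter_duplication_eq_cliqueClutter_of_dupGraph
    {V : Type*} [Fintype V] [DecidableEq V] (G : SimpleGraph V) (x₁ : V)
    (s : Set (Option V)) :
    ((∃ e : Set V, IsMaxClique G e ∧ s = some '' e) ∨
      (∃ e : Set V, IsMaxClique G e ∧ x₁ ∈ e ∧
        s = insert none (some '' (e \ {x₁}))))
    ↔ IsMaxClique (dupGraph G x₁) s := by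
  constructor
  · rintro (⟨e, ⟨hec, hem⟩, rfl⟩ | ⟨e, ⟨hec, hem⟩, hx, rfl⟩)
    · refine ⟨dup_clique_image_some G x₁ hec, ?_⟩
      intro t ht hst
      by_cases hn : none ∈ t
      · exfalso
        have hx₁ : x₁ ∉ e := by
          intro hx
          exact dup_not_mem_x₁ G x₁ ht hn (hst ⟨x₁, hx, rfl⟩)
        have hclq : G.IsClique (insert x₁ e) := by
          refine hec.insert ?_
          intro b hb _
          exact dup_adj_of_none_mem G x₁ ht hn (hst ⟨b, hb, rfl⟩)
        have := hem _ hclq (Set.subset_insert _ _)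
        exact hx₁ (this ▸ Set.mem_insert x₁ e)
      · have ht' : G.IsClique {a | some a ∈ t} := dup_clique_preimage G x₁ ht
        have hsub : e ⊆ {a | some a ∈ t} := fun a ha => hst ⟨a, ha, rfl⟩
        have := hem _ ht' hsub
        rw [set_eq_image_of_none_not_mem hn, ← this]
    · refine ⟨dup_clique_insert_none G x₁ (hec.subset (Set.diff_subset))
        (fun a ha => hec hx ha.1 (fun h => ha.2 h.symm)), ?_⟩
      intro t ht hst
      have hn : none ∈ t := hst (Set.mem_insert _ _)
      have hx₁t : x₁ ∉ {a | some a ∈ t} := fun h => dup_not_mem_x₁ G x₁ ht hn h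
      have ht' : G.IsClique {a | some a ∈ t} := dup_clique_preimage G x₁ ht
      have hclq : G.IsClique (insert x₁ {a | some a ∈ t}) := by
        refine ht'.insert ?_
        intro b hb _
        exact dup_adj_of_none_mem G x₁ ht hn hb
      have hsub : e ⊆ insert x₁ {a | some a ∈ t} := by
        intro a ha
        by_cases hax : a = x₁
        · exact hax ▸ Set.mem_insert _ _
        · exact Set.mem_insert_of_mem _
            (hst (Set.mem_insert_of_mem _ ⟨a, ⟨ha, hax⟩, rfl⟩))
      have heq := hem _ hclq hsub
      have hdiff : e \ {x₁} = {a | some a ∈ t} := by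
        rw [heq]
        ext a
        simp only [Set.mem_diff, Set.mem_insert_iff, Set.mem_singleton_iff]
        constructor
        · rintro ⟨h1 | h1, h2⟩
          · exact absurd h1 h2
          · exact h1
        · intro h
          exact ⟨Or.inr h, fun hh => hx₁t (hh ▸ h)⟩
      rw [hdiff]
      exact (set_eq_insert_none_of_none_mem hn).symm
  · rintro ⟨hsc, hsm⟩
    by_cases hn : none ∈ s
    · right
      set e' : Set V := {a | some a ∈ s} with he'
      have hx₁ : x₁ ∉ e' := fun h => dup_not_mem_x₁ G x₁ hsc hn h
      have he'c : G.IsClique e' := dup_clique_preimage G x₁ hsc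
      have hadj : ∀ a ∈ e', G.Adj x₁ a := fun a ha => dup_adj_of_none_mem G x₁ hsc hn ha
      have heclq : G.IsClique (insert x₁ e') := by
        refine he'c.insert ?_
        intro b hb _
        exact hadj b hb
      refine ⟨insert x₁ e', ⟨heclq, ?_⟩, Set.mem_insert _ _, ?_⟩
      · intro t htc hte
        have hx₁t : x₁ ∈ t := hte (Set.mem_insert _ _)
        have hclq2 : (dupGraph G x₁).IsClique (insert none (some '' (t \ {x₁}))) := by
          refine dup_clique_insert_none G x₁ (htc.subset Set.diff_subset) ?_
          intro a ha
          exact htc hx₁t ha.1 (fun h => ha.2 h.symm)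
        have hsub2 : s ⊆ insert none (some '' (t \ {x₁})) := by
          rw [set_eq_insert_none_of_none_mem hn]
          apply Set.insert_subset_insert
          apply Set.image_mono
          intro a ha
          exact ⟨hte (Set.mem_insert_of_mem _ ha), fun h => hx₁ (h ▸ ha)⟩
        have hseq := hsm _ hclq2 hsub2
        have he't : e' = t \ {x₁} := by
          ext a
          constructor
          · intro ha
            have : some a ∈ s := ha
            rw [hseq] at this
            rcases this with h | ⟨b, hb, hba⟩
            · exact absurd h (by simp)
            · exact (Option.some_injective V hba) ▸ hb
          · intro ha
            have : some a ∈ insert none (some '' (t \ {x₁})) :=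
              Set.mem_insert_of_mem _ ⟨a, ha, rfl⟩
            rw [← hseq] at this
            exact this
        rw [he't, Set.insert_diff_singleton, Set.insert_eq_self.mpr hx₁t]
      · have : insert x₁ e' \ {x₁} = e' := by
          ext a
          simp only [Set.mem_diff, Set.mem_insert_iff, Set.mem_singleton_iff]
          constructor
          · rintro ⟨h1 | h1, h2⟩
            · exact absurd h1 h2
            · exact h1
          · intro h
            exact ⟨Or.inr h, fun hh => hx₁ (hh ▸ h)⟩
        rw [this]
        exact set_eq_insert_none_of_none_mem hn
    · left
      refine ⟨{a | some a ∈ s}, ⟨dup_clique_preimage G x₁ hsc, ?_⟩,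
        set_eq_image_of_none_not_mem hn⟩
      intro t htc hte
      have hclq2 : (dupGraph G x₁).IsClique (some '' t) := dup_clique_image_some G x₁ htc
      have hsub2 : s ⊆ some '' t := by
        rw [set_eq_image_of_none_not_mem hn]
        exact Set.image_mono hte
      have hseq := hsm _ hclq2 hsub2
      ext a
      constructor
      · intro ha
        have : some a ∈ some '' t := hseq ▸ ha
        rcases this with ⟨b, hb, hba⟩
        exact (Option.some_injective V hba) ▸ hb
      · intro ha
        have : some a ∈ some '' t := ⟨a, ha, rfl⟩
        rw [← hseq] at this
        exact this
end

section
/- Let P = (X, ≺) be a finite poset and let C be the clutter on X whose edges are the maximal chains of P. Then C satisfies the König property: the maximum number of pairwise disjoint maximal chains of P equals the minimum size of a set of vertices meeting every maximal chain of P. -/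
set_option linter.unusedSectionVars false

open List

section MengerDev

variable {V : Type*} [DecidableEq V] [Fintype V]

/-- `p` is a walk in the digraph with edge set `E`. -/
def EWalk (E : Finset (V × V)) (p : List V) : Prop :=
  p.Chain' (fun a b => (a, b) ∈ E)

/-- `p` is a (vertex-)path in `E` from the set `A` to the set `B`. -/
def EPath (E : Finset (V × V)) (A B : Finset V) (p : List V) : Prop :=
  EWalk E p ∧ p.Nodup ∧ (∃ a ∈ A, p.head? = some a) ∧ (∃ b ∈ B, p.getLast? = some b)

/-- `T` meets every `A`–`B` path of `E`. -/
def Cuts (E : Finset (V × V)) (A B T : Finset V) : Prop :=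
  ∀ p, EPath E A B p → ∃ v ∈ T, v ∈ p

def cutSet (E : Finset (V × V)) (A B : Finset V) : Set ℕ :=
  {k | ∃ T : Finset V, T.card = k ∧ Cuts E A B T}

noncomputable def cutMin (E : Finset (V × V)) (A B : Finset V) : ℕ :=
  sInf (cutSet E A B)

lemma EPath.ne_nil {E : Finset (V × V)} {A B : Finset V} {p : List V}
    (h : EPath E A B p) : p ≠ [] := by
  obtain ⟨-, -, ⟨a, -, ha⟩, -⟩ := h
  intro hn; simp [hn] at ha

lemma cutSet_nonempty (E : Finset (V × V)) (A B : Finset V) :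
    (cutSet E A B).Nonempty := by
  refine ⟨(Finset.univ : Finset V).card, Finset.univ, rfl, ?_⟩
  intro p hp
  obtain ⟨-, -, ⟨a, -, ha⟩, -⟩ := hp
  exact ⟨a, Finset.mem_univ a, List.mem_of_mem_head? ha⟩

lemma cutMin_mem (E : Finset (V × V)) (A B : Finset V) :
    cutMin E A B ∈ cutSet E A B :=
  Nat.sInf_mem (cutSet_nonempty E A B)

lemma cutMin_le {E : Finset (V × V)} {A B T : Finset V} (hT : Cuts E A B T) :
    cutMin E A B ≤ T.card :=
  Nat.sInf_le ⟨T, rfl, hT⟩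

/-- adjacency of an (ordered) pair in a list -/
def adjIn (p : List V) (d : V × V) : Prop :=
  ∃ l₁ l₂ : List V, p = l₁ ++ d.1 :: d.2 :: l₂

lemma adjIn_of_cons {p : List V} {a : V} {d : V × V} (h : adjIn p d) :
    adjIn (a :: p) d := by
  obtain ⟨l₁, l₂, rfl⟩ := h
  exact ⟨a :: l₁, l₂, rfl⟩

lemma chain'_rel_of_adjIn {R : V → V → Prop} {p : List V} {d : V × V}
    (hc : p.Chain' R) (h : adjIn p d) : R d.1 d.2 := by
  obtain ⟨l₁, l₂, rfl⟩ := h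
  have := (List.isChain_append.1 hc).2.1
  exact (List.isChain_cons_cons.1 this).1

lemma chain'_of_adjIn_rel {R : V → V → Prop} {p : List V}
    (h : ∀ d : V × V, adjIn p d → R d.1 d.2) : p.Chain' R := by
  induction p with
  | nil => exact List.IsChain.nil
  | cons a t ih =>
    cases t with
    | nil => exact List.IsChain.singleton _
    | cons b t' =>
      refine List.isChain_cons_cons.2 ⟨h (a, b) ⟨[], t', rfl⟩, ih ?_⟩
      intro d hd
      exact h d (adjIn_of_cons hd)

lemma adjIn.fst_mem_dropLast {p : List V} {d : V × V} (h : adjIn p d) :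
    d.1 ∈ p.dropLast := by
  obtain ⟨l₁, l₂, rfl⟩ := h
  have : (l₁ ++ d.1 :: d.2 :: l₂).dropLast = l₁ ++ (d.1 :: d.2 :: l₂).dropLast := by
    rw [List.dropLast_append_of_ne_nil]; simp
  rw [this]
  simp

lemma adjIn.fst_mem {p : List V} {d : V × V} (h : adjIn p d) : d.1 ∈ p := by
  obtain ⟨l₁, l₂, rfl⟩ := h; simp

lemma adjIn.snd_mem {p : List V} {d : V × V} (h : adjIn p d) : d.2 ∈ p := by
  obtain ⟨l₁, l₂, rfl⟩ := h; simp

lemma adjIn_of_prefix {p q : List V} {d : V × V} (hpq : p <+: q) (h : adjIn p d) :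
    adjIn q d := by
  obtain ⟨l₁, l₂, rfl⟩ := h
  obtain ⟨r, rfl⟩ := hpq
  exact ⟨l₁, l₂ ++ r, by simp⟩

lemma getLast?_cons_ne_nil {α : Type*} {a b : α} {q : List α} (hq : q.getLast? = some b) :
    (a :: q).getLast? = some b := by
  have : (a :: q) = [a] ++ q := rfl
  rw [this, List.getLast?_append, hq]
  rfl

lemma getLast?_cons_of_ne_nil' {α : Type*} {a : α} {q : List α} (hq : q ≠ []) :
    (a :: q).getLast? = q.getLast? := by
  cases hgl : q.getLast? with
  | none => exact absurd (List.getLast?_eq_none_iff.1 hgl) hq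
  | some c => exact getLast?_cons_ne_nil hgl

/-- every walk contains a path (with the same endpoints, vertices among the walk's). -/
lemma walk_to_path {R : V → V → Prop} :
    ∀ n (p : List V), p.length ≤ n → p.Chain' R → ∀ a b, p.head? = some a →
      p.getLast? = some b →
      ∃ q : List V, q.Chain' R ∧ q.Nodup ∧ q.head? = some a ∧ q.getLast? = some b ∧
        ∀ v ∈ q, v ∈ p := by
  intro n
  induction n with
  | zero =>
    intro p hl _ a b ha _
    have : p = [] := List.length_eq_zero_iff.1 (Nat.le_zero.1 hl)
    subst this; simp at ha
  | succ n ih =>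
    intro p hl hc a b ha hb
    obtain ⟨rest, rfl⟩ := List.head?_eq_some_iff.1 ha
    by_cases hmem : a ∈ rest
    · -- cut the loop : rest = u ++ a :: w, recurse on a :: w
      obtain ⟨u, w, rfl⟩ := List.append_of_mem hmem
      have hsuf : (a :: w) <:+ (a :: (u ++ a :: w)) := ⟨a :: u, by simp⟩
      have hc' : (a :: w).Chain' R := hc.suffix hsuf
      have hb' : (a :: w).getLast? = some b := by
        have heq : (a :: (u ++ a :: w)) = (a :: u) ++ (a :: w) := by simp
        rw [heq, List.getLast?_append] at hb
        cases hgl : (a :: w).getLast? with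
        | none => exact absurd hgl (by simp [List.getLast?_eq_none_iff])
        | some c => rw [hgl] at hb; simp at hb; exact congrArg some hb
      have hlen : (a :: w).length ≤ n := by simp at hl ⊢; omega
      obtain ⟨q, h1, h2, h3, h4, h5⟩ := ih (a :: w) hlen hc' a b rfl hb'
      refine ⟨q, h1, h2, h3, h4, fun v hv => ?_⟩
      have := h5 v hv
      simp at this ⊢
      tauto
    · cases rest with
      | nil =>
        simp at hb
        exact ⟨[a], List.IsChain.singleton _, by simp, rfl, by simp [hb], by simp⟩
      | cons c t =>
        have hc' : (c :: t).Chain' R := hc.tail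
        have hb' : (c :: t).getLast? = some b := by
          rwa [List.getLast?_cons_cons] at hb
        have hlen : (c :: t).length ≤ n := by simp at hl ⊢; omega
        obtain ⟨q, h1, h2, h3, h4, h5⟩ := ih (c :: t) hlen hc' c b rfl hb'
        have hqne : q ≠ [] := by intro h; simp [h] at h3
        refine ⟨a :: q, ?_, ?_, rfl, getLast?_cons_ne_nil h4, ?_⟩
        · refine List.isChain_cons.2 ⟨?_, h1⟩
          intro y hy
          rw [h3] at hy
          simp at hy
          rw [← hy]
          exact (List.isChain_cons_cons.1 hc).1
        · refine List.nodup_cons.2 ⟨fun haq => hmem (h5 a haq), h2⟩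
        · intro v hv
          rcases List.mem_cons.1 hv with rfl | hv
          · simp
          · simp [h5 v hv]

/-- the prefix of `p` up to (and including) the first vertex lying in `S`. -/
def cutPrefix (S : Finset V) : List V → List V
  | [] => []
  | a :: r => if a ∈ S then [a] else a :: cutPrefix S r

lemma cutPrefix_prefix (S : Finset V) : ∀ p : List V, cutPrefix S p <+: p := by
  intro p
  induction p with
  | nil => simp [cutPrefix]
  | cons a r ih =>
    by_cases h : a ∈ S
    · simp [cutPrefix, h]
    · rw [cutPrefix, if_neg h]
      obtain ⟨t, ht⟩ := ih
      exact ⟨t, by rw [List.cons_append, ht]⟩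

lemma cutPrefix_head? (S : Finset V) (p : List V) :
    (cutPrefix S p).head? = p.head? := by
  cases p with
  | nil => rfl
  | cons a r => by_cases h : a ∈ S <;> simp [cutPrefix, h]

lemma cutPrefix_getLast?_mem (S : Finset V) :
    ∀ p : List V, (∃ v ∈ p, v ∈ S) → ∃ b ∈ S, (cutPrefix S p).getLast? = some b := by
  intro p
  induction p with
  | nil => simp
  | cons a r ih =>
    intro hex
    by_cases h : a ∈ S
    · exact ⟨a, h, by simp [cutPrefix, h]⟩
    · have : ∃ v ∈ r, v ∈ S := by
        obtain ⟨v, hv, hvS⟩ := hex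
        rcases List.mem_cons.1 hv with rfl | hv
        · exact absurd hvS h
        · exact ⟨v, hv, hvS⟩
      obtain ⟨b, hbS, hb⟩ := ih this
      have hne : cutPrefix S r ≠ [] := by intro hn; rw [hn] at hb; simp at hb
      exact ⟨b, hbS, by simp [cutPrefix, h]; exact getLast?_cons_ne_nil hb⟩

lemma cutPrefix_dropLast (S : Finset V) :
    ∀ p : List V, ∀ v ∈ (cutPrefix S p).dropLast, v ∉ S := by
  intro p
  induction p with
  | nil => simp [cutPrefix]
  | cons a r ih =>
    by_cases h : a ∈ S
    · simp [cutPrefix, h]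
    · intro v hv
      rw [cutPrefix, if_neg h] at hv
      cases hq : cutPrefix S r with
      | nil => rw [hq] at hv; simp at hv
      | cons c t =>
        rw [hq, List.dropLast_cons₂] at hv
        rcases List.mem_cons.1 hv with rfl | hv
        · exact h
        · exact ih v (hq ▸ hv)

lemma cutPrefix_spec {E : Finset (V × V)} {A S : Finset V} {p : List V}
    (hw : EWalk E p) (hn : p.Nodup) (hh : ∃ a ∈ A, p.head? = some a)
    (hmeet : ∃ v ∈ p, v ∈ S) :
    EPath E A S (cutPrefix S p) ∧ (∀ v ∈ (cutPrefix S p).dropLast, v ∉ S) ∧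
      cutPrefix S p <+: p := by
  have hpre := cutPrefix_prefix S p
  obtain ⟨a, haA, ha⟩ := hh
  obtain ⟨b, hbS, hb⟩ := cutPrefix_getLast?_mem S p hmeet
  exact ⟨⟨hw.prefix hpre, hpre.sublist.nodup hn,
    ⟨a, haA, by rw [cutPrefix_head?]; exact ha⟩, ⟨b, hbS, hb⟩⟩,
    cutPrefix_dropLast S p, hpre⟩

/-- transpose (reverse all edges) of a digraph. -/
def tpose (E : Finset (V × V)) : Finset (V × V) := E.image Prod.swap

lemma mem_tpose {E : Finset (V × V)} {d : V × V} : d ∈ tpose E ↔ d.swap ∈ E := by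
  constructor
  · rintro h
    obtain ⟨c, hc, rfl⟩ := Finset.mem_image.1 h
    simpa using hc
  · intro h
    exact Finset.mem_image.2 ⟨d.swap, h, by simp⟩

lemma tpose_erase (E : Finset (V × V)) (e : V × V) :
    tpose (E.erase e) = (tpose E).erase e.swap :=
  Finset.image_erase Prod.swap_injective E e

lemma ewalk_reverse {E : Finset (V × V)} {p : List V} :
    EWalk (tpose E) p.reverse ↔ EWalk E p := by
  simp only [EWalk, List.Chain']
  rw [List.isChain_reverse]
  constructor
  · exact fun h => h.imp (fun a b hab => by simpa [mem_tpose] using hab)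
  · exact fun h => h.imp (fun a b hab => by simp [flip, mem_tpose]; exact hab)

lemma mem_tail_reverse {p : List V} {v : V} :
    v ∈ p.reverse.tail ↔ v ∈ p.dropLast := by
  rcases eq_or_ne p [] with rfl | hne
  · simp
  · rcases List.eq_nil_or_concat' p with rfl | ⟨q, b, rfl⟩
    · simp
    · simp [List.reverse_concat]

/-- the key disjointness lemma: a vertex common to a forward half-path and a
backward half-path must be the splice point. -/
lemma cross_lemma {E : Finset (V × V)} {e : V × V} {A B S Sx Sy : Finset V}
    (hS : Cuts (E.erase e) A B S) (hSx : S ⊆ Sx) (hSy : S ⊆ Sy)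
    {pA pB : List V}
    (hA : EWalk (E.erase e) pA) (hAh : ∃ a ∈ A, pA.head? = some a)
    {sa : V} (hAl : pA.getLast? = some sa)
    (hAav : ∀ v ∈ pA.dropLast, v ∉ Sx)
    (hB : EWalk (E.erase e) pB) {sb : V} (hBh : pB.head? = some sb)
    (hBl : ∃ b ∈ B, pB.getLast? = some b)
    (hBav : ∀ v ∈ pB.tail, v ∉ Sy)
    {v : V} (hvA : v ∈ pA) (hvB : v ∈ pB) :
    v = sa ∧ v = sb ∧ v ∈ S := by
  obtain ⟨l₁, l₂, hpA⟩ := List.append_of_mem hvA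
  obtain ⟨m₁, m₂, hpB⟩ := List.append_of_mem hvB
  set W : List V := l₁ ++ v :: m₂ with hW
  -- W is a walk in E.erase e from A to B
  have hWc : (W : List V).Chain' (fun a b => (a, b) ∈ E.erase e) := by
    simp only [hW, List.Chain', List.isChain_append]
    refine ⟨(hpA ▸ hA).prefix ⟨v :: l₂, rfl⟩, (hpB ▸ hB).suffix ⟨m₁, rfl⟩, ?_⟩
    have := (List.isChain_append.1 (hpA ▸ hA)).2.2
    intro x hx y hy
    simp at hy
    exact hy ▸ this x hx v rfl
  have hWh : W.head? = pA.head? := by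
    rw [hW, hpA]; simp [List.head?_append]
  have hWl : W.getLast? = pB.getLast? := by
    rw [hW, hpB]
    have h1 : (l₁ ++ v :: m₂).getLast? = (v :: m₂).getLast? := by
      rw [List.getLast?_append]
      cases hgl : (v :: m₂).getLast? with
      | none => simp [List.getLast?_eq_none_iff] at hgl
      | some c => rfl
    have h2 : (m₁ ++ v :: m₂).getLast? = (v :: m₂).getLast? := by
      rw [List.getLast?_append]
      cases hgl : (v :: m₂).getLast? with
      | none => simp [List.getLast?_eq_none_iff] at hgl
      | some c => rfl
    rw [h1, h2]
  -- extract a path and cut it with S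
  obtain ⟨a, haA, ha⟩ := hAh
  obtain ⟨b, hbB, hb⟩ := hBl
  obtain ⟨q, hq1, hq2, hq3, hq4, hq5⟩ :=
    walk_to_path W.length W le_rfl hWc a b (by rw [hWh]; exact ha) (by rw [hWl]; exact hb)
  obtain ⟨w, hwS, hwq⟩ := hS q ⟨hq1, hq2, ⟨a, haA, hq3⟩, ⟨b, hbB, hq4⟩⟩
  have hwW : w ∈ W := hq5 w hwq
  -- locate w in W
  have hl₁sub : ∀ x ∈ l₁, x ∈ pA.dropLast := by
    intro x hx
    rw [hpA, List.dropLast_append_of_ne_nil (by simp)]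
    exact List.mem_append_left _ hx
  have hm₂sub : ∀ x ∈ m₂, x ∈ pB.tail := by
    intro x hx
    rw [hpB]
    cases m₁ with
    | nil => simpa using hx
    | cons c t => simp [List.tail_cons]; right; simp [hx]
  have hvS : v ∈ S := by
    rcases List.mem_append.1 hwW with hw1 | hw2
    · exact absurd (hSx hwS) (hAav w (hl₁sub w hw1))
    · rcases List.mem_cons.1 hw2 with rfl | hw3
      · exact hwS
      · exact absurd (hSy hwS) (hBav w (hm₂sub w hw3))
  -- v is the last vertex of pA
  have hvsa : v = sa := by
    obtain ⟨l, hl⟩ := List.getLast?_eq_some_iff.1 hAl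
    have : pA.dropLast = l := by rw [hl]; exact List.dropLast_concat
    rcases List.mem_append.1 (hl ▸ hvA) with h1 | h2
    · exact absurd (hSx hvS) (hAav v (this ▸ h1))
    · simpa using h2
  -- v is the first vertex of pB
  have hvsb : v = sb := by
    obtain ⟨t, ht⟩ := List.head?_eq_some_iff.1 hBh
    rcases List.mem_cons.1 (ht ▸ hvB) with h1 | h2
    · exact h1
    · exact absurd (hSy hvS) (hBav v (by rw [ht]; simpa using h2))
  exact ⟨hvsa, hvsb, hvS⟩

/-- One half of the Menger induction step: a system of `|Sx|` disjoint paths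
from `A` to `Sx`, each meeting `Sx` only at its endpoint, avoiding edge `e`. -/
lemma half_system {n : ℕ}
    (IH : ∀ E₂ : Finset (V × V), E₂.card ≤ n → ∀ A₂ B₂ : Finset V,
      ∃ F : Finset (List V), F.card = cutMin E₂ A₂ B₂ ∧ (∀ p ∈ F, EPath E₂ A₂ B₂ p) ∧
        (∀ p ∈ F, ∀ q ∈ F, p ≠ q → ∀ v ∈ p, v ∉ q))
    {E : Finset (V × V)} (hE : E.card ≤ n + 1) {e : V × V} (he : e ∈ E)
    {A Sx : Finset V} (hex : e.1 ∈ Sx)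
    (hT : ∀ T : Finset V,
      (∀ p, EPath E A Sx p → (∀ v ∈ p.dropLast, v ∉ Sx) → ∃ v ∈ T, v ∈ p) →
      Sx.card ≤ T.card) :
    ∃ f : V → List V,
      (∀ s ∈ Sx, EWalk (E.erase e) (f s) ∧ (f s).Nodup ∧
        (∃ a ∈ A, (f s).head? = some a) ∧ (f s).getLast? = some s ∧
        (∀ v ∈ (f s).dropLast, v ∉ Sx)) ∧
      (∀ s ∈ Sx, ∀ t ∈ Sx, s ≠ t → ∀ v ∈ f s, v ∉ f t) := by
  classical
  set EA : Finset (V × V) := (E.erase e).filter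
    (fun d => ∃ p, EPath E A Sx p ∧ (∀ v ∈ p.dropLast, v ∉ Sx) ∧ adjIn p d) with hEA
  -- first-hit paths are EA-paths
  have hfh : ∀ p, EPath E A Sx p → (∀ v ∈ p.dropLast, v ∉ Sx) → EPath EA A Sx p := by
    intro p hp hav
    obtain ⟨hw, hn, hh, hl⟩ := hp
    refine ⟨?_, hn, hh, hl⟩
    refine chain'_of_adjIn_rel (fun d hd => ?_)
    have hdE : d ∈ E := chain'_rel_of_adjIn hw hd
    have hdne : d ≠ e := by
      rintro rfl
      exact hav d.1 hd.fst_mem_dropLast hex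
    exact Finset.mem_filter.2 ⟨Finset.mem_erase.2 ⟨hdne, hdE⟩, p, ⟨hw, hn, hh, hl⟩, hav, hd⟩
  have hEAsub : EA ⊆ E.erase e := Finset.filter_subset _ _
  have hEAcard : EA.card ≤ n := by
    calc EA.card ≤ (E.erase e).card := Finset.card_le_card hEAsub
    _ = E.card - 1 := Finset.card_erase_of_mem he
    _ ≤ n := by omega
  -- the cut bound for EA
  have hk : Sx.card ≤ cutMin EA A Sx := by
    obtain ⟨T0, hT0card, hT0⟩ := cutMin_mem EA A Sx
    rw [← hT0card]
    exact hT T0 (fun p hp hav => hT0 p (hfh p hp hav))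
  obtain ⟨F, hFcard, hFpath, hFdisj⟩ := IH EA hEAcard A Sx
  obtain ⟨F', hF'sub, hF'card⟩ := Finset.exists_subset_card_eq (s := F) (n := Sx.card) (by omega)
  -- take first-hit prefixes
  have hcp : ∀ p ∈ F', EPath EA A Sx (cutPrefix Sx p) ∧
      (∀ v ∈ (cutPrefix Sx p).dropLast, v ∉ Sx) ∧ cutPrefix Sx p <+: p := by
    intro p hp
    obtain ⟨hw, hn, hh, b, hbSx, hb⟩ := hFpath p (hF'sub hp)
    exact cutPrefix_spec hw hn hh ⟨b, List.mem_of_mem_getLast? hb, hbSx⟩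
  have hcpne : ∀ p ∈ F', cutPrefix Sx p ≠ [] := by
    intro p hp h
    obtain ⟨⟨_, _, ⟨a, _, ha⟩, _⟩, _, _⟩ := hcp p hp
    rw [h] at ha; simp at ha
  have hinj : Set.InjOn (cutPrefix Sx) ↑F' := by
    intro p hp p' hp' hpp
    by_contra hne
    obtain ⟨⟨_, _, ⟨a, _, ha⟩, _⟩, _, hpre⟩ := hcp p hp
    have haP : a ∈ p := hpre.sublist.mem (List.mem_of_mem_head? ha)
    have haP' : a ∈ p' := by
      have := (hcp p' hp').2.2
      exact this.sublist.mem (by rw [← hpp]; exact List.mem_of_mem_head? ha)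
    exact hFdisj p (hF'sub hp) p' (hF'sub hp') hne a haP haP'
  set F'' := F'.image (cutPrefix Sx) with hF''
  have hF''card : F''.card = Sx.card := by
    rw [hF'', Finset.card_image_of_injOn hinj, hF'card]
  have hF''props : ∀ q ∈ F'', EPath EA A Sx q ∧ (∀ v ∈ q.dropLast, v ∉ Sx) := by
    intro q hq
    obtain ⟨p, hp, rfl⟩ := Finset.mem_image.1 hq
    exact ⟨(hcp p hp).1, (hcp p hp).2.1⟩
  have hF''disj : ∀ q ∈ F'', ∀ q' ∈ F'', q ≠ q' → ∀ v ∈ q, v ∉ q' := by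
    intro q hq q' hq' hne v hv hv'
    obtain ⟨p, hp, rfl⟩ := Finset.mem_image.1 hq
    obtain ⟨p', hp', rfl⟩ := Finset.mem_image.1 hq'
    have hpp : p ≠ p' := fun h => hne (by rw [h])
    exact hFdisj p (hF'sub hp) p' (hF'sub hp') hpp v
      ((hcp p hp).2.2.sublist.mem hv) ((hcp p' hp').2.2.sublist.mem hv')
  -- last vertices of F'' biject onto Sx
  have hLsub : F''.image List.getLast? ⊆ Sx.image some := by
    intro o ho
    obtain ⟨q, hq, rfl⟩ := Finset.mem_image.1 ho
    obtain ⟨⟨_, _, _, b, hbSx, hb⟩, _⟩ := hF''props q hq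
    rw [hb]
    exact Finset.mem_image.2 ⟨b, hbSx, rfl⟩
  have hLinj : Set.InjOn List.getLast? (↑F'' : Set (List V)) := by
    intro q hq q' hq' hqq
    by_contra hne
    obtain ⟨⟨_, _, _, b, hbSx, hb⟩, _⟩ := hF''props q hq
    have hbq : b ∈ q := List.mem_of_mem_getLast? hb
    have hbq' : b ∈ q' := List.mem_of_mem_getLast? (by rw [← hqq]; exact hb)
    exact hF''disj q hq q' hq' hne b hbq hbq'
  have hLeq : F''.image List.getLast? = Sx.image some := by
    apply Finset.eq_of_subset_of_card_le hLsub
    rw [Finset.card_image_of_injOn hLinj, hF''card,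
      Finset.card_image_of_injective _ (Option.some_injective V)]
  have hex' : ∀ s ∈ Sx, ∃ q ∈ F'', q.getLast? = some s := by
    intro s hs
    have : some s ∈ F''.image List.getLast? := by
      rw [hLeq]; exact Finset.mem_image.2 ⟨s, hs, rfl⟩
    obtain ⟨q, hq, hql⟩ := Finset.mem_image.1 this
    exact ⟨q, hq, hql⟩
  have hch : ∀ s : V, ∃ q : List V, s ∈ Sx → q ∈ F'' ∧ q.getLast? = some s := by
    intro s
    by_cases hs : s ∈ Sx
    · obtain ⟨q, hq, hql⟩ := hex' s hs
      exact ⟨q, fun _ => ⟨hq, hql⟩⟩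
    · exact ⟨[], fun h => absurd h hs⟩
  choose f hf using hch
  refine ⟨f, ?_, ?_⟩
  · intro s hs
    obtain ⟨hmem, hlast⟩ := hf s hs
    obtain ⟨⟨hw, hn, hh, _⟩, hav⟩ := hF''props _ hmem
    exact ⟨hw.imp (fun a b hab => hEAsub hab), hn, hh, hlast, hav⟩
  · intro s hs t ht hst v hvs hvt
    obtain ⟨hmem, hlast⟩ := hf s hs
    obtain ⟨hmem', hlast'⟩ := hf t ht
    have hne : f s ≠ f t := by
      intro h
      rw [h, hlast'] at hlast
      exact hst (Option.some_injective V hlast).symm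
    exact hF''disj _ hmem _ hmem' hne v hvs hvt

lemma epath_nil_edges {A B : Finset V} {p : List V}
    (hp : EPath (∅ : Finset (V × V)) A B p) : ∃ a ∈ A ∩ B, p = [a] := by
  obtain ⟨hw, hn, ⟨a, haA, ha⟩, ⟨b, hbB, hb⟩⟩ := hp
  obtain ⟨t, rfl⟩ := List.head?_eq_some_iff.1 ha
  cases t with
  | nil =>
    simp at hb
    exact ⟨a, Finset.mem_inter.2 ⟨haA, hb ▸ hbB⟩, rfl⟩
  | cons c t' =>
    have : (a, c) ∈ (∅ : Finset (V × V)) := (List.isChain_cons_cons.1 hw).1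
    simp at this

lemma menger_empty (A B : Finset V) :
    ∃ F : Finset (List V), F.card = cutMin (∅ : Finset (V × V)) A B ∧
      (∀ p ∈ F, EPath (∅ : Finset (V × V)) A B p) ∧
      (∀ p ∈ F, ∀ q ∈ F, p ≠ q → ∀ v ∈ p, v ∉ q) := by
  have hcut : cutMin (∅ : Finset (V × V)) A B = (A ∩ B).card := by
    apply _root_.le_antisymm
    · apply cutMin_le
      intro p hp
      obtain ⟨a, haAB, rfl⟩ := epath_nil_edges hp
      exact ⟨a, haAB, by simp⟩
    · obtain ⟨T, hTcard, hTcut⟩ := cutMin_mem (∅ : Finset (V × V)) A B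
      rw [← hTcard]
      apply Finset.card_le_card
      intro a ha
      have : EPath (∅ : Finset (V × V)) A B [a] := by
        refine ⟨by simp [EWalk, List.Chain'], by simp, ⟨a, (Finset.mem_inter.1 ha).1, rfl⟩,
          ⟨a, (Finset.mem_inter.1 ha).2, rfl⟩⟩
      obtain ⟨v, hvT, hvp⟩ := hTcut [a] this
      simp at hvp
      exact hvp ▸ hvT
  refine ⟨(A ∩ B).image (fun a => [a]), ?_, ?_, ?_⟩
  · rw [hcut, Finset.card_image_of_injective]
    intro a b hab; injection hab
  · intro p hp
    obtain ⟨a, ha, rfl⟩ := Finset.mem_image.1 hp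
    exact ⟨by simp [EWalk, List.Chain'], by simp, ⟨a, (Finset.mem_inter.1 ha).1, rfl⟩,
      ⟨a, (Finset.mem_inter.1 ha).2, rfl⟩⟩
  · intro p hp q hq hpq v hvp hvq
    obtain ⟨a, _, rfl⟩ := Finset.mem_image.1 hp
    obtain ⟨b, _, rfl⟩ := Finset.mem_image.1 hq
    simp at hvp hvq
    exact hpq (by rw [← hvp, hvq])

/-- Menger's theorem (directed, vertex version): there is a system of
pairwise vertex-disjoint `A`–`B` paths of size the minimum cut. -/
theorem menger_aux : ∀ n (E : Finset (V × V)), E.card ≤ n → ∀ A B : Finset V,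
    ∃ F : Finset (List V), F.card = cutMin E A B ∧ (∀ p ∈ F, EPath E A B p) ∧
      (∀ p ∈ F, ∀ q ∈ F, p ≠ q → ∀ v ∈ p, v ∉ q) := by
  intro n
  induction n with
  | zero =>
    intro E hE A B
    have : E = ∅ := Finset.card_eq_zero.1 (Nat.le_zero.1 hE)
    subst this
    exact menger_empty A B
  | succ n ih =>
    intro E hE A B
    classical
    rcases eq_or_ne E ∅ with rfl | hEne
    · exact menger_empty A B
    obtain ⟨e, he⟩ := Finset.nonempty_iff_ne_empty.2 hEne
    set E' := E.erase e with hE'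
    have hE'card : E'.card ≤ n := by
      rw [hE', Finset.card_erase_of_mem he]
      omega
    have hsubpath : ∀ p, EPath E' A B p → EPath E A B p := by
      rintro p ⟨hw, hn, hh, hl⟩
      exact ⟨hw.imp (fun a b hab => Finset.mem_of_mem_erase hab), hn, hh, hl⟩
    have hmono : cutMin E' A B ≤ cutMin E A B := by
      obtain ⟨T, hTcard, hTcut⟩ := cutMin_mem E A B
      rw [← hTcard]
      exact cutMin_le (fun p hp => hTcut p (hsubpath p hp))
    by_cases hcase : cutMin E' A B = cutMin E A B
    · obtain ⟨F, h1, h2, h3⟩ := ih E' hE'card A B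
      exact ⟨F, by rw [h1, hcase], fun p hp => hsubpath p (h2 p hp), h3⟩
    · have hlt : cutMin E' A B < cutMin E A B := lt_of_le_of_ne hmono hcase
      set k := cutMin E A B with hk
      obtain ⟨S, hScard, hScut⟩ := cutMin_mem E' A B
      -- every E-path meets S or goes through e
      have hkey : ∀ p, EPath E A B p → (∃ v ∈ S, v ∈ p) ∨ adjIn p e := by
        intro p hp
        by_cases hadj : adjIn p e
        · exact Or.inr hadj
        · left
          obtain ⟨hw, hn, hh, hl⟩ := hp
          refine hScut p ⟨?_, hn, hh, hl⟩
          refine chain'_of_adjIn_rel (fun d hd => ?_)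
          refine Finset.mem_erase.2 ⟨?_, chain'_rel_of_adjIn hw hd⟩
          rintro rfl
          exact hadj hd
      have hcut1 : Cuts E A B (insert e.1 S) := by
        intro p hp
        rcases hkey p hp with ⟨v, hvS, hvp⟩ | hadj
        · exact ⟨v, Finset.mem_insert_of_mem hvS, hvp⟩
        · exact ⟨e.1, Finset.mem_insert_self _ _, hadj.fst_mem⟩
      have hcut2 : Cuts E A B (insert e.2 S) := by
        intro p hp
        rcases hkey p hp with ⟨v, hvS, hvp⟩ | hadj
        · exact ⟨v, Finset.mem_insert_of_mem hvS, hvp⟩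
        · exact ⟨e.2, Finset.mem_insert_self _ _, hadj.snd_mem⟩
      have hScard' : S.card = k - 1 ∧ k ≥ 1 := by
        have h1 : k ≤ (insert e.1 S).card := cutMin_le hcut1
        have h2 : (insert e.1 S).card ≤ S.card + 1 := Finset.card_insert_le _ _
        constructor <;> omega
      have hxS : e.1 ∉ S := by
        intro hx
        have : (insert e.1 S).card = S.card := by rw [Finset.insert_eq_self.2 hx]
        have h1 : k ≤ (insert e.1 S).card := cutMin_le hcut1
        omega
      have hyS : e.2 ∉ S := by
        intro hy
        have : (insert e.2 S).card = S.card := by rw [Finset.insert_eq_self.2 hy]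
        have h1 : k ≤ (insert e.2 S).card := cutMin_le hcut2
        omega
      set Sx := insert e.1 S with hSx
      set Sy := insert e.2 S with hSy
      have hSxcard : Sx.card = k := by
        rw [hSx, Finset.card_insert_of_notMem hxS]
        omega
      have hSycard : Sy.card = k := by
        rw [hSy, Finset.card_insert_of_notMem hyS]
        omega
            -- A-side path system
      have hmeetSx : ∀ p, EPath E A B p → ∃ v ∈ p, v ∈ Sx := by
        intro p hp
        rcases hkey p hp with ⟨v, hvS, hvp⟩ | hadj
        · exact ⟨v, hvp, Finset.mem_insert_of_mem hvS⟩
        · exact ⟨e.1, hadj.fst_mem, Finset.mem_insert_self _ _⟩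
      have hmeetSy : ∀ p, EPath E A B p → ∃ v ∈ p, v ∈ Sy := by
        intro p hp
        rcases hkey p hp with ⟨v, hvS, hvp⟩ | hadj
        · exact ⟨v, hvp, Finset.mem_insert_of_mem hvS⟩
        · exact ⟨e.2, hadj.snd_mem, Finset.mem_insert_self _ _⟩
      have hTA : ∀ T : Finset V,
          (∀ p, EPath E A Sx p → (∀ v ∈ p.dropLast, v ∉ Sx) → ∃ v ∈ T, v ∈ p) →
          Sx.card ≤ T.card := by
        intro T hTmeets
        rw [hSxcard, hk]
        apply cutMin_le
        intro p hp
        have hmeet := hmeetSx p hp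
        obtain ⟨hw, hn, hh, hl⟩ := hp
        obtain ⟨hq, hqav, hqpre⟩ := cutPrefix_spec (E := E) (A := A) (S := Sx) hw hn hh hmeet
        obtain ⟨v, hvT, hvq⟩ := hTmeets _ hq hqav
        exact ⟨v, hvT, hqpre.sublist.mem hvq⟩
      obtain ⟨fA, hfAprops, hfAdisj⟩ :=
        half_system ih hE he (Finset.mem_insert_self _ _) hTA
      -- B-side path system (via the transposed digraph)
      have htE : (tpose E).card ≤ n + 1 := le_trans Finset.card_image_le hE
      have hte : e.swap ∈ tpose E := mem_tpose.2 (by simpa using he)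
      have htex : (e.swap).1 ∈ Sy := Finset.mem_insert_self _ _
      have hTB : ∀ T : Finset V,
          (∀ p, EPath (tpose E) B Sy p → (∀ v ∈ p.dropLast, v ∉ Sy) → ∃ v ∈ T, v ∈ p) →
          Sy.card ≤ T.card := by
        intro T hTmeets
        rw [hSycard, hk]
        apply cutMin_le
        intro p hp
        have hmeet := hmeetSy p hp
        obtain ⟨hw, hn, ⟨a, haA, ha⟩, ⟨b, hbB, hb⟩⟩ := hp
        have hwr : EWalk (tpose E) p.reverse := ewalk_reverse.2 hw
        have hnr : p.reverse.Nodup := List.nodup_reverse.2 hn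
        have hhr : ∃ b' ∈ B, p.reverse.head? = some b' :=
          ⟨b, hbB, by rw [List.head?_reverse]; exact hb⟩
        have hmr : ∃ v ∈ p.reverse, v ∈ Sy := by
          obtain ⟨v, hv1, hv2⟩ := hmeet
          exact ⟨v, List.mem_reverse.2 hv1, hv2⟩
        obtain ⟨hq, hqav, hqpre⟩ := cutPrefix_spec hwr hnr hhr hmr
        obtain ⟨v, hvT, hvq⟩ := hTmeets _ hq hqav
        exact ⟨v, hvT, List.mem_reverse.1 (hqpre.sublist.mem hvq)⟩
      obtain ⟨g, hgprops, hgdisj⟩ := half_system ih htE hte htex hTB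
      set fB : V → List V := fun s => (g s).reverse with hfB
      have hfBprops : ∀ s ∈ Sy, EWalk (E.erase e) (fB s) ∧ (fB s).Nodup ∧
          (fB s).head? = some s ∧ (∃ b ∈ B, (fB s).getLast? = some b) ∧
          (∀ v ∈ (fB s).tail, v ∉ Sy) := by
        intro s hs
        obtain ⟨hw, hn, ⟨b, hbB, hbh⟩, hgl, hav⟩ := hgprops s hs
        refine ⟨?_, List.nodup_reverse.2 hn, ?_, ⟨b, hbB, ?_⟩, ?_⟩
        · have hw' : EWalk (tpose (E.erase e)) (g s) := by
            rw [tpose_erase]; exact hw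
          exact (ewalk_reverse (E := E.erase e) (p := (g s).reverse)).1
            (by rw [List.reverse_reverse]; exact hw')
        · rw [hfB, List.head?_reverse]; exact hgl
        · rw [hfB, List.getLast?_reverse]; exact hbh
        · intro v hv
          exact hav v (mem_tail_reverse.1 hv)
      have hfBdisj : ∀ s ∈ Sy, ∀ t ∈ Sy, s ≠ t → ∀ v ∈ fB s, v ∉ fB t := by
        intro s hs t ht hst v hvs hvt
        exact hgdisj s hs t ht hst v (List.mem_reverse.1 hvs) (List.mem_reverse.1 hvt)
      -- gluing
      set σ : V → V := fun s => if s = e.1 then e.2 else s with hσ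
      have hσmem : ∀ s ∈ Sx, σ s ∈ Sy := by
        intro s hs
        rcases Finset.mem_insert.1 hs with rfl | hsS
        · simp only [hσ, if_pos rfl]; exact Finset.mem_insert_self _ _
        · have hne : s ≠ e.1 := fun h => hxS (h ▸ hsS)
          simp only [hσ, if_neg hne]; exact Finset.mem_insert_of_mem hsS
      have hcross : ∀ s ∈ Sx, ∀ t ∈ Sy, ∀ v, v ∈ fA s → v ∈ fB t →
          v = s ∧ v = t ∧ v ∈ S := by
        intro s hs t ht v hvA hvB
        obtain ⟨hAw, hAn, hAh, hAl, hAav⟩ := hfAprops s hs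
        obtain ⟨hBw, hBn, hBh, hBl, hBav⟩ := hfBprops t ht
        exact cross_lemma hScut (Finset.subset_insert _ _) (Finset.subset_insert _ _)
          hAw hAh hAl hAav hBw hBh hBl hBav hvA hvB
      have hnocross : ∀ s ∈ Sx, ∀ t ∈ Sx, ∀ v, v ∈ fA s → v ∈ fB (σ t) →
          s = t ∧ v = s ∧ s ∈ S := by
        intro s hs t ht v hvA hvB
        obtain ⟨h1, h2, h3⟩ := hcross s hs (σ t) (hσmem t ht) v hvA hvB
        by_cases hte : t = e.1
        · exfalso
          have h2' : v = e.2 := by simpa [hσ, hte] using h2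
          exact hyS (h2' ▸ h3)
        · simp only [hσ, if_neg hte] at h2
          exact ⟨h1.symm.trans h2, h1, h1 ▸ h3⟩
      set glue : V → List V := fun s =>
        fA s ++ (if s = e.1 then fB e.2 else (fB s).tail) with hglue
      have hmemglue : ∀ s ∈ Sx, ∀ v ∈ glue s, v ∈ fA s ∨ v ∈ fB (σ s) := by
        intro s hs v hv
        rw [hglue] at hv
        by_cases hse : s = e.1
        · simp only [hse, if_pos rfl] at hv
          rcases List.mem_append.1 hv with h | h
          · exact Or.inl (hse ▸ h)
          · right; simp only [hσ, hse, if_pos rfl]; exact h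
        · simp only [if_neg hse] at hv
          rcases List.mem_append.1 hv with h | h
          · exact Or.inl h
          · right; simp only [hσ, if_neg hse]; exact List.mem_of_mem_tail h
      have hgluepath : ∀ s ∈ Sx, EPath E A B (glue s) := by
        intro s hs
        obtain ⟨hAw, hAn, ⟨a, haA, ha⟩, hAl, hAav⟩ := hfAprops s hs
        have hfAne : fA s ≠ [] := by
          intro h; rw [h] at ha; simp at ha
        by_cases hse : s = e.1
        · -- glue s = fA s ++ fB e.2
          have hy : e.2 ∈ Sy := Finset.mem_insert_self _ _
          obtain ⟨hBw, hBn, hBh, ⟨b, hbB, hBl⟩, hBav⟩ := hfBprops e.2 hy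
          have hgeq : glue s = fA s ++ fB e.2 := by rw [hglue]; simp [hse]
          rw [hgeq]
          refine ⟨?_, ?_, ⟨a, haA, ?_⟩, ⟨b, hbB, ?_⟩⟩
          · simp only [EWalk, List.Chain']; rw [List.isChain_append]
            refine ⟨hAw.imp (fun x y hxy => Finset.mem_of_mem_erase hxy),
              hBw.imp (fun x y hxy => Finset.mem_of_mem_erase hxy), ?_⟩
            intro x hx y hy'
            rw [hAl] at hx; rw [hBh] at hy'
            simp at hx hy'
            rw [← hx, ← hy', hse]
            exact he
          · rw [List.nodup_append]
            refine ⟨hAn, hBn, fun v hv w hv' hvw => ?_⟩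
            subst hvw
            obtain ⟨h1, h2, h3⟩ := hcross s hs e.2 hy v hv hv'
            rw [hse] at h1
            exact hxS (h1 ▸ h3)
          · rw [List.head?_append, ha]; rfl
          · rw [List.getLast?_append, hBl]; rfl
        · -- glue s = fA s ++ (fB s).tail , s ∈ S
          have hsS : s ∈ S := by
            rcases Finset.mem_insert.1 hs with h | h
            · exact absurd h hse
            · exact h
          have hsy : s ∈ Sy := Finset.mem_insert_of_mem hsS
          obtain ⟨hBw, hBn, hBh, ⟨b, hbB, hBl⟩, hBav⟩ := hfBprops s hsy
          obtain ⟨t', ht'⟩ := List.head?_eq_some_iff.1 hBh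
          have hgeq : glue s = fA s ++ t' := by
            rw [hglue]; simp only [if_neg hse, ht', List.tail_cons]
          rw [hgeq]
          refine ⟨?_, ?_, ⟨a, haA, ?_⟩, ?_⟩
          · simp only [EWalk, List.Chain']; rw [List.isChain_append]
            refine ⟨hAw.imp (fun x y hxy => Finset.mem_of_mem_erase hxy), ?_, ?_⟩
            · have : (fB s).Chain' (fun x y => (x, y) ∈ E) :=
                hBw.imp (fun x y hxy => Finset.mem_of_mem_erase hxy)
              rw [ht'] at this
              exact this.tail
            · intro x hx y hy'
              rw [hAl] at hx; simp at hx
              have : (fB s).Chain' (fun x y => (x, y) ∈ E) :=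
                hBw.imp (fun x y hxy => Finset.mem_of_mem_erase hxy)
              rw [ht'] at this
              rw [← hx]
              exact (List.isChain_cons.1 this).1 y hy'
          · rw [List.nodup_append]
            refine ⟨hAn, by rw [ht'] at hBn; exact (List.nodup_cons.1 hBn).2, ?_⟩
            intro v hv w hv' hvw
            subst hvw
            have hvfB : v ∈ fB s := by rw [ht']; exact List.mem_cons_of_mem _ hv'
            obtain ⟨h1, h2, h3⟩ := hcross s hs s hsy v hv hvfB
            rw [ht'] at hBn
            exact (List.nodup_cons.1 hBn).1 (h2 ▸ hv')
          · rw [List.head?_append, ha]; rfl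
          · by_cases ht'' : t' = []
            · refine ⟨b, hbB, ?_⟩
              have hbs : s = b := by
                rw [ht', ht''] at hBl; simpa using hBl
              rw [List.getLast?_append, ht'']
              simp only [List.getLast?_nil, Option.none_or]
              rw [hAl, hbs]
            · refine ⟨b, hbB, ?_⟩
              have hbt : t'.getLast? = some b := by
                rw [← hBl, ht', getLast?_cons_of_ne_nil' ht'']
              rw [List.getLast?_append, hbt]
              rfl
      have hσinj : ∀ s ∈ Sx, ∀ t ∈ Sx, s ≠ t → σ s ≠ σ t := by
        intro s hs t ht hst heq
        by_cases hs1 : s = e.1 <;> by_cases ht1 : t = e.1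
        · exact hst (hs1.trans ht1.symm)
        · have h1 : σ s = e.2 := by simp [hσ, hs1]
          have h2 : σ t = t := by simp [hσ, ht1]
          have htS : t ∈ S := by
            rcases Finset.mem_insert.1 ht with h | h
            · exact absurd h ht1
            · exact h
          rw [h1, h2] at heq
          exact hyS (heq ▸ htS)
        · have h1 : σ t = e.2 := by simp [hσ, ht1]
          have h2 : σ s = s := by simp [hσ, hs1]
          have hsS : s ∈ S := by
            rcases Finset.mem_insert.1 hs with h | h
            · exact absurd h hs1
            · exact h
          rw [h1, h2] at heq
          exact hyS (heq.symm ▸ hsS)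
        · have h1 : σ s = s := by simp [hσ, hs1]
          have h2 : σ t = t := by simp [hσ, ht1]
          rw [h1, h2] at heq
          exact hst heq
      have hgluedisj : ∀ s ∈ Sx, ∀ t ∈ Sx, s ≠ t → ∀ v ∈ glue s, v ∉ glue t := by
        intro s hs t ht hst v hvs hvt
        rcases hmemglue s hs v hvs with h1 | h1 <;> rcases hmemglue t ht v hvt with h2 | h2
        · exact hfAdisj s hs t ht hst v h1 h2
        · obtain ⟨hst', _, _⟩ := hnocross s hs t ht v h1 h2
          exact hst hst'
        · obtain ⟨hts', _, _⟩ := hnocross t ht s hs v h2 h1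
          exact hst hts'.symm
        · exact hfBdisj (σ s) (hσmem s hs) (σ t) (hσmem t ht)
            (hσinj s hs t ht hst) v h1 h2
      have hglueinj : Set.InjOn glue (↑Sx : Set V) := by
        intro s hs t ht heq
        by_contra hne
        obtain ⟨_, _, ⟨a, _, ha⟩, _⟩ := hgluepath s hs
        have hav : a ∈ glue s := List.mem_of_mem_head? ha
        exact hgluedisj s hs t ht hne a hav (heq ▸ hav)
      refine ⟨Sx.image glue, ?_, ?_, ?_⟩
      · rw [Finset.card_image_of_injOn hglueinj, hSxcard, hk]
      · intro p hp
        obtain ⟨s, hs, rfl⟩ := Finset.mem_image.1 hp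
        exact hgluepath s hs
      · intro p hp q hq hpq v hvp hvq
        obtain ⟨s, hs, rfl⟩ := Finset.mem_image.1 hp
        obtain ⟨t, ht, rfl⟩ := Finset.mem_image.1 hq
        have hst : s ≠ t := fun h => hpq (by rw [h])
        exact hgluedisj s hs t ht hst v hvp hvq

end MengerDev

section PosetDev

variable {V : Type*} [DecidableEq V] [Fintype V] [PartialOrder V]

/-- a finite chain can be listed in increasing order. -/
lemma chain_toList : ∀ n (s : Finset V), s.card ≤ n → IsChain (· < ·) (↑s : Set V) →
    ∃ p : List V, p.toFinset = s ∧ p.Chain' (· < ·) ∧ p.Nodup := by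
  intro n
  induction n with
  | zero =>
    intro s hs _
    have : s = ∅ := Finset.card_eq_zero.1 (Nat.le_zero.1 hs)
    exact ⟨[], by simp [this], List.IsChain.nil, by simp⟩
  | succ n ih =>
    intro s hs hchain
    rcases eq_or_ne s ∅ with rfl | hne
    · exact ⟨[], by simp, List.IsChain.nil, by simp⟩
    obtain ⟨a, haS, hamin⟩ := s.exists_minimal (Finset.nonempty_iff_ne_empty.2 hne)
    have hlt : ∀ b ∈ s, b ≠ a → a < b := by
      intro b hb hba
      rcases hchain (by simpa using haS) (by simpa using hb) (Ne.symm hba) with h | h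
      · exact h
      · exact absurd (hamin hb h.le) h.not_ge
    have hcard : (s.erase a).card ≤ n := by
      rw [Finset.card_erase_of_mem haS]
      omega
    have hchain' : IsChain (· < ·) (↑(s.erase a) : Set V) :=
      hchain.mono (by simp [Finset.coe_subset])
    obtain ⟨p', hp'1, hp'2, hp'3⟩ := ih (s.erase a) hcard hchain'
    refine ⟨a :: p', ?_, ?_, ?_⟩
    · rw [List.toFinset_cons, hp'1, Finset.insert_erase haS]
    · refine List.isChain_cons.2 ⟨?_, hp'2⟩
      intro y hy
      have hy' : y ∈ s.erase a := by
        rw [← hp'1]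
        simpa using List.mem_of_mem_head? hy
      exact hlt y (Finset.mem_of_mem_erase hy') (Finset.ne_of_mem_erase hy')
    · refine List.nodup_cons.2 ⟨?_, hp'3⟩
      intro ha
      have : a ∈ s.erase a := by rw [← hp'1]; simpa using ha
      simp at this

variable [Nonempty V]

lemma maxChain_insert {s : Finset V} (hmax : IsMaxChain (· < ·) (↑s : Set V))
    {c : V} (hcomp : ∀ b ∈ s, b ≠ c → c < b ∨ b < c) : c ∈ s := by
  have hchain : IsChain (· < ·) (insert c (↑s : Set V)) := by
    refine hmax.1.insert ?_
    intro b hb hbc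
    exact hcomp b (by simpa using hb) (fun h => hbc h.symm)
  have := hmax.2 hchain (Set.subset_insert _ _)
  have hc : c ∈ (↑s : Set V) := this ▸ Set.mem_insert c ↑s
  simpa using hc

lemma maxChain_nonempty {s : Finset V} (hmax : IsMaxChain (· < ·) (↑s : Set V)) :
    s.Nonempty := by
  rcases s.eq_empty_or_nonempty with rfl | h
  · exfalso
    obtain ⟨v⟩ := (inferInstance : Nonempty V)
    have hch : IsChain (· < ·) ({v} : Set V) := Set.Subsingleton.isChain (by simp)
    have h2 := hmax.2 hch (by simp)
    have : v ∈ (∅ : Set V) := by rw [Finset.coe_empty] at h2; rw [h2]; simp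
    simp at this
  · exact h

/-- a maximal chain yields a saturated path from a minimal to a maximal element. -/
lemma maxChain_path {s : Finset V} (hmax : IsMaxChain (· < ·) (↑s : Set V)) :
    ∃ p : List V, p.toFinset = s ∧ p.Nodup ∧ p.Chain' (· ⋖ ·) ∧
      (∃ a, p.head? = some a ∧ IsMin a) ∧ (∃ b, p.getLast? = some b ∧ IsMax b) := by
  obtain ⟨p, hp1, hp2, hp3⟩ := chain_toList s.card s le_rfl hmax.1
  have hpw : p.Pairwise (· < ·) := List.isChain_iff_pairwise.1 hp2
  have hpne : p ≠ [] := by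
    intro h
    obtain ⟨v, hv⟩ := maxChain_nonempty hmax
    rw [← hp1, h] at hv
    simp at hv
  have hmem' : ∀ x ∈ s, x ∈ p := by
    intro x hx; rw [← hp1] at hx; simpa using hx
  have hmem : ∀ x ∈ p, x ∈ s := by
    intro x hx; rw [← hp1]; simpa using hx
  -- the cover property
  have hcov : p.Chain' (· ⋖ ·) := by
    refine chain'_of_adjIn_rel (fun d hd => ?_)
    have hlt : d.1 < d.2 := chain'_rel_of_adjIn hp2 hd
    refine ⟨hlt, ?_⟩
    intro c h1c hc2
    obtain ⟨l₁, l₂, hdec⟩ := hd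
    have hpw' := hdec ▸ hpw
    obtain ⟨pw1, pw2, pwc⟩ := List.pairwise_append.1 hpw'
    have hd2lt : ∀ y ∈ l₂, d.2 < y :=
      (List.pairwise_cons.1 (List.pairwise_cons.1 pw2).2).1
    have hd1lt : ∀ y ∈ l₂, d.1 < y := fun y hy => hlt.trans (hd2lt y hy)
    have hcs : c ∈ s := by
      refine maxChain_insert hmax (fun b hb hbc => ?_)
      have hbp := hdec ▸ hmem' b hb
      rcases List.mem_append.1 hbp with hbl | hbr
      · exact Or.inr ((pwc b hbl d.1 (by simp)).trans h1c)
      · rcases List.mem_cons.1 hbr with rfl | hbr2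
        · exact Or.inr h1c
        · rcases List.mem_cons.1 hbr2 with rfl | hbr3
          · exact Or.inl hc2
          · exact Or.inl (hc2.trans (hd2lt b hbr3))
    have hcp := hdec ▸ hmem' c hcs
    rcases List.mem_append.1 hcp with hcl | hcr
    · exact absurd (pwc c hcl d.1 (by simp)) (asymm h1c)
    · rcases List.mem_cons.1 hcr with rfl | hcr2
      · exact absurd h1c (lt_irrefl _)
      · rcases List.mem_cons.1 hcr2 with rfl | hcr3
        · exact absurd hc2 (lt_irrefl _)
        · exact absurd (hd2lt c hcr3) (asymm hc2)
  cases p with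
  | nil => exact absurd rfl hpne
  | cons a t =>
    have hha : ∀ y ∈ t, a < y := by
      intro y hy
      exact (List.rel_of_pairwise_cons hpw) hy
    have hamin : IsMin a := by
      intro c hca
      by_contra hac
      have hlt : c < a := hca.lt_of_ne (fun h => hac (h ▸ le_refl c))
      have hcs : c ∈ s := by
        refine maxChain_insert hmax (fun b hb hbc => ?_)
        rcases List.mem_cons.1 (hmem' b hb) with rfl | hbt
        · exact Or.inl hlt
        · exact Or.inl (hlt.trans (hha b hbt))
      rcases List.mem_cons.1 (hmem' c hcs) with rfl | hct
      · exact absurd hlt (lt_irrefl c)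
      · exact absurd (hlt.trans (hha c hct)) (lt_irrefl c)
    -- last element
    have hglex : ∃ b, (a :: t).getLast? = some b := by
      cases hgl : (a :: t).getLast? with
      | none => exact absurd hgl (by simp)
      | some b => exact ⟨b, rfl⟩
    obtain ⟨b, hgl⟩ := hglex
    obtain ⟨q, hq⟩ := List.getLast?_eq_some_iff.1 hgl
    have hqlt : ∀ x ∈ q, x < b := by
      intro x hx
      have := hq ▸ hpw
      exact (List.pairwise_append.1 this).2.2 x hx b (by simp)
    have hbmax : IsMax b := by
      intro c hbc
      by_contra hcb
      have hlt : b < c := hbc.lt_of_ne (fun h => hcb (h ▸ le_refl b))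
      have hcs : c ∈ s := by
        refine maxChain_insert hmax (fun d hd hdc => ?_)
        have hdp := hq ▸ hmem' d hd
        rcases List.mem_append.1 hdp with hdq | hdb
        · exact Or.inr ((hqlt d hdq).trans hlt)
        · rcases List.mem_cons.1 hdb with rfl | h
          · exact Or.inr hlt
          · simp at h
      have hcp := hq ▸ hmem' c hcs
      rcases List.mem_append.1 hcp with hcq | hcb'
      · exact absurd (hqlt c hcq) (asymm hlt)
      · rcases List.mem_cons.1 hcb' with rfl | h
        · exact absurd hlt (lt_irrefl _)
        · simp at h
    exact ⟨a :: t, hp1, hp3, hcov, ⟨a, rfl, hamin⟩, ⟨b, hgl, hbmax⟩⟩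

/-- auxiliary: a saturated chain admits no strict insertion between head and last. -/
lemma cover_insert_aux : ∀ p : List V, p.Chain' (· ⋖ ·) →
    ∀ c, (∀ x ∈ p, x < c ∨ c < x) → ∀ a, p.head? = some a → a < c →
    ∀ b, p.getLast? = some b → c < b → False := by
  intro p
  induction p with
  | nil => intro _ c _ a ha; simp at ha
  | cons a t ih =>
    intro hc c hcomp a' ha' hac b hb hcb
    have haa : a' = a := by simpa using ha'.symm
    subst haa
    cases t with
    | nil =>
      have : b = a' := by simpa using hb.symm
      subst this
      exact absurd (hac.trans hcb) (lt_irrefl _)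
    | cons d t' =>
      rcases hcomp d (by simp) with hdc | hcd
      · exact ih hc.tail c (fun x hx => hcomp x (List.mem_cons_of_mem _ hx)) d rfl hdc
          b (by rwa [List.getLast?_cons_cons] at hb) hcb
      · exact (List.isChain_cons_cons.1 hc).1.2 hac hcd

/-- a saturated path from a minimal to a maximal element is a maximal chain. -/
lemma path_maxChain {p : List V} (hne : p ≠ []) (hnd : p.Nodup)
    (hcov : p.Chain' (· ⋖ ·))
    (hmin : ∃ a, p.head? = some a ∧ IsMin a) (hmax : ∃ b, p.getLast? = some b ∧ IsMax b) :
    IsMaxChain (· < ·) (↑p.toFinset : Set V) := by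
  have hlt : p.Chain' (· < ·) := hcov.imp (fun a b h => h.1)
  have hpw : p.Pairwise (· < ·) := List.isChain_iff_pairwise.1 hlt
  constructor
  · intro x hx y hy hxy
    have hx' : x ∈ p := by simpa using hx
    have hy' : y ∈ p := by simpa using hy
    have hpw' : p.Pairwise (fun a b => a < b ∨ b < a) := hpw.imp (fun h => Or.inl h)
    haveI : Std.Symm (fun a b : V => a < b ∨ b < a) := ⟨fun _ _ h => h.symm⟩
    exact hpw'.forall hx' hy' hxy
  · intro t htchain hsub
    by_contra hnemax
    obtain ⟨c, hct, hcs⟩ := (Set.ssubset_iff_of_subset hsub).1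
      (ssubset_of_subset_of_ne hsub hnemax)
    have hcomp : ∀ x ∈ p, x < c ∨ c < x := by
      intro x hx
      have hxt : x ∈ t := hsub (by simpa using hx)
      have hxc : x ≠ c := fun h => hcs (by simpa using h ▸ hx)
      rcases htchain hxt hct hxc with h | h
      · exact Or.inl h
      · exact Or.inr h
    obtain ⟨a, ha, hamin⟩ := hmin
    obtain ⟨b, hb, hbmax⟩ := hmax
    have hac : a < c := by
      rcases hcomp a (List.mem_of_mem_head? ha) with h | h
      · exact h
      · exact absurd (hamin h.le) h.not_ge
    have hcb : c < b := by
      rcases hcomp b (List.mem_of_mem_getLast? hb) with h | h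
      · exact absurd (hbmax h.le) h.not_ge
      · exact h
    exact cover_insert_aux p hcov c hcomp a ha hac b hb hcb

end PosetDev

/-- the clutter of maximal chains of a finite poset has the
König property: the maximum number of pairwise disjoint maximal chains equals
the minimum size of a set of vertices meeting every maximal chain. -/
theorem maximalChains_clutter_koenig
    {V : Type*} [Fintype V] [DecidableEq V] [PartialOrder V] [Nonempty V] :
    ∃ m : ℕ,
      IsGreatest {k : ℕ | ∃ F : Finset (Finset V), F.card = k ∧
        (∀ s ∈ F, IsMaxChain (· < ·) (↑s : Set V)) ∧
        (↑F : Set (Finset V)).Pairwise fun a b => Disjoint a b} m ∧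
      IsLeast {k : ℕ | ∃ T : Finset V, T.card = k ∧
        ∀ s : Finset V, IsMaxChain (· < ·) (↑s : Set V) → ∃ v ∈ T, v ∈ s} m := by
  classical
  set E : Finset (V × V) := Finset.univ.filter (fun d => d.1 ⋖ d.2) with hE
  set A : Finset V := Finset.univ.filter (fun v => IsMin v) with hA
  set B : Finset V := Finset.univ.filter (fun v => IsMax v) with hB
  have hc2p : ∀ s : Finset V, IsMaxChain (· < ·) (↑s : Set V) →
      ∃ p, EPath E A B p ∧ p.toFinset = s := by
    intro s hs
    obtain ⟨p, h1, h2, h3, ⟨a, ha, hamin⟩, ⟨b, hb, hbmax⟩⟩ := maxChain_path hs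
    refine ⟨p, ⟨?_, h2, ⟨a, ?_, ha⟩, ⟨b, ?_, hb⟩⟩, h1⟩
    · exact h3.imp (fun x y hxy => by rw [hE]; simp only [Finset.mem_filter]; exact ⟨Finset.mem_univ _, hxy⟩)
    · rw [hA]; simp only [Finset.mem_filter]; exact ⟨Finset.mem_univ _, hamin⟩
    · rw [hB]; simp only [Finset.mem_filter]; exact ⟨Finset.mem_univ _, hbmax⟩
  have hp2c : ∀ p, EPath E A B p → IsMaxChain (· < ·) (↑p.toFinset : Set V) := by
    rintro p ⟨hw, hn, ⟨a, haA, ha⟩, ⟨b, hbB, hb⟩⟩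
    refine path_maxChain ?_ hn ?_ ⟨a, ha, ?_⟩ ⟨b, hb, ?_⟩
    · intro h; rw [h] at ha; simp at ha
    · refine hw.imp (fun x y hxy => ?_)
      rw [hE] at hxy; simp only [Finset.mem_filter] at hxy; exact hxy.2
    · rw [hA] at haA; simp only [Finset.mem_filter] at haA; exact haA.2
    · rw [hB] at hbB; simp only [Finset.mem_filter] at hbB; exact hbB.2
  set m := cutMin E A B with hm
  obtain ⟨T0, hT0card, hT0cut⟩ := cutMin_mem E A B
  have hT0cover : ∀ s : Finset V, IsMaxChain (· < ·) (↑s : Set V) → ∃ v ∈ T0, v ∈ s := by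
    intro s hs
    obtain ⟨p, hp, hps⟩ := hc2p s hs
    obtain ⟨v, hvT, hvp⟩ := hT0cut p hp
    exact ⟨v, hvT, by rw [← hps]; simpa using hvp⟩
  obtain ⟨F0, hF0card, hF0path, hF0disj⟩ := menger_aux E.card E le_rfl A B
  refine ⟨m, ⟨?_, ?_⟩, ⟨?_, ?_⟩⟩
  · -- m is attained by a disjoint family of maximal chains
    refine ⟨F0.image List.toFinset, ?_, ?_, ?_⟩
    · rw [Finset.card_image_of_injOn ?_, hF0card]
      intro p hp q hq hpq
      by_contra hne
      obtain ⟨a', _, ha'⟩ := (hF0path p hp).2.2.1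
      have hmem : a' ∈ p := List.mem_of_mem_head? ha'
      have hmem' : a' ∈ q := by
        have h1 : a' ∈ p.toFinset := by simpa using hmem
        rw [hpq] at h1; simpa using h1
      exact hF0disj p hp q hq hne a' hmem hmem'
    · intro s hsF
      obtain ⟨p, hp, rfl⟩ := Finset.mem_image.1 hsF
      exact hp2c p (hF0path p hp)
    · intro s hsF t htF hst
      obtain ⟨p, hp, rfl⟩ := Finset.mem_image.1 (Finset.mem_coe.1 hsF)
      obtain ⟨q, hq, rfl⟩ := Finset.mem_image.1 (Finset.mem_coe.1 htF)
      have hpq : p ≠ q := fun h => hst (by rw [h])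
      rw [Finset.disjoint_left]
      intro a hap haq
      exact hF0disj p hp q hq hpq a (by simpa using hap) (by simpa using haq)
  · -- upper bound for packings
    rintro k' ⟨F, hFcard, hFchains, hFdisj⟩
    have hpick : ∀ s : Finset V, ∃ v, s ∈ F → v ∈ T0 ∧ v ∈ s := by
      intro s
      by_cases hs : s ∈ F
      · obtain ⟨v, h1, h2⟩ := hT0cover s (hFchains s hs)
        exact ⟨v, fun _ => ⟨h1, h2⟩⟩
      · exact ⟨Classical.arbitrary V, fun h => absurd h hs⟩
    choose g hg using hpick
    rw [← hFcard, hm, ← hT0card]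
    apply Finset.card_le_card_of_injOn g (fun s hs => (hg s hs).1)
    intro s hs t ht heq
    by_contra hne
    have hd : Disjoint s t := hFdisj hs ht hne
    exact Finset.disjoint_left.1 hd (hg s (Finset.mem_coe.1 hs)).2
      (heq ▸ (hg t (Finset.mem_coe.1 ht)).2)
  · -- m is attained by a cover
    exact ⟨T0, hT0card, hT0cover⟩
  · -- lower bound for covers
    rintro k' ⟨T, hTcard, hTcover⟩
    rw [← hTcard, hm]
    apply cutMin_le
    intro p hp
    obtain ⟨v, hvT, hvs⟩ := hTcover p.toFinset (hp2c p hp)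
    exact ⟨v, hvT, by simpa using hvs⟩
end
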